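/- arXiv:2410.13347 — 6 statements merged into one kernel-verified Lean document; each statement's English description precedes it below -/
import Mathlib

section
/- (Abstract fixed-metric form of Proposition 1.1, lower semicontinuity on the finiteness set.) Assume the pair (a,e) satisfies the Poincaré hypothesis. Let k ≥ 1 be an integer. Let β and (β_n)_{n∈ℕ} be continuous symmetric bilinear forms on H with β(φ,φ) ≥ 0 and β_n(φ,φ) ≥ 0 for all φ ∈ H, with β(e,e) > 0 and β_n(e,e) > 0 for all n, with ‖β_n − β‖ → 0 as n → ∞, and with limsup_{n→∞} λ_k(β_n) < +∞. Then λ_k(β) ≤ liminf_{n→∞} λ_k(β_n). -/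
open scoped ENNReal

set_option maxHeartbeats 1000000

/-- The quotient `a(φ,φ)/β(φ,φ)` with the convention `+∞` if `β(φ,φ) = 0 < a(φ,φ)`
and `0` if both vanish. -/
noncomputable def rayleighQuot (A B : ℝ) : ℝ≥0∞ :=
  if B = 0 then (if A = 0 then 0 else ⊤) else ENNReal.ofReal (A / B)

/-- The `k`-th generalized eigenvalue `λ_k(β)`: the infimum over all `k`-dimensional
subspaces `V` of `{φ : β(e,φ) = 0}` of `sup_{φ ∈ V, φ ≠ 0} a(φ,φ)/β(φ,φ)`. -/
noncomputable def genEigenvalue {H : Type*} [NormedAddCommGroup H] [InnerProductSpace ℝ H]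
    (a : H →L[ℝ] H →L[ℝ] ℝ) (e : H) (k : ℕ) (β : H →L[ℝ] H →L[ℝ] ℝ) : ℝ≥0∞ :=
  ⨅ (V : Submodule ℝ H) (_ : Module.finrank ℝ V = k ∧ ∀ φ ∈ V, β e φ = 0),
    ⨆ (φ : H) (_ : φ ∈ V ∧ φ ≠ 0), rayleighQuot (a φ φ) (β φ φ)

/-- The Poincaré hypothesis for the pair `(a, e)`. -/
def PoincareHyp {H : Type*} [NormedAddCommGroup H] [InnerProductSpace ℝ H]
    (a : H →L[ℝ] H →L[ℝ] ℝ) (e : H) : Prop :=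
  ∃ C₀ : ℝ, 0 ≤ C₀ ∧ ∀ ℓ : H →L[ℝ] ℝ, ℓ e = 1 → ∀ φ : H, ℓ φ = 0 →
    ‖φ‖ ^ 2 ≤ (C₀ * ‖ℓ‖ ^ 2 + 1) * a φ φ

private lemma bilin_expand {H : Type*} [NormedAddCommGroup H] [InnerProductSpace ℝ H]
    (B : H →L[ℝ] H →L[ℝ] ℝ) (x y : H) (c : ℝ) :
    B (x - c • y) (x - c • y) = B x x - c * B x y - c * B y x + c * c * B y y := by
  simp only [map_sub, map_smul, ContinuousLinearMap.sub_apply,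
    ContinuousLinearMap.smul_apply, smul_eq_mul]
  ring

private lemma opnorm_bound {H : Type*} [NormedAddCommGroup H] [InnerProductSpace ℝ H]
    (b β : H →L[ℝ] H →L[ℝ] ℝ) (x y : H) :
    |b x y - β x y| ≤ ‖b - β‖ * ‖x‖ * ‖y‖ := by
  have h1 : ‖((b - β) x) y‖ ≤ ‖(b - β) x‖ * ‖y‖ := ContinuousLinearMap.le_opNorm _ y
  have h2 : ‖(b - β) x‖ ≤ ‖b - β‖ * ‖x‖ := (b - β).le_opNorm x
  have h3 : ((b - β) x) y = b x y - β x y := by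
    simp [ContinuousLinearMap.sub_apply]
  rw [h3, Real.norm_eq_abs] at h1
  nlinarith [norm_nonneg y]

private lemma key {H : Type*} [NormedAddCommGroup H] [InnerProductSpace ℝ H]
    (a : H →L[ℝ] H →L[ℝ] ℝ)
    (ha_symm : ∀ φ ψ : H, a φ ψ = a ψ φ)
    (ha_nonneg : ∀ φ : H, 0 ≤ a φ φ)
    (e : H) (he : ∀ ψ : H, a e ψ = 0)
    (C₀ : ℝ) (hC₀ : 0 ≤ C₀)
    (hP : ∀ ℓ : H →L[ℝ] ℝ, ℓ e = 1 → ∀ φ : H, ℓ φ = 0 →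
      ‖φ‖ ^ 2 ≤ (C₀ * ‖ℓ‖ ^ 2 + 1) * a φ φ)
    (k : ℕ) (hk : 1 ≤ k)
    (β b : H →L[ℝ] H →L[ℝ] ℝ)
    (hβ_symm : ∀ φ ψ : H, β φ ψ = β ψ φ)
    (hβe : 0 < β e e)
    (hb_nonneg : ∀ φ : H, 0 ≤ b φ φ)
    (M ε : ℝ) (hM : 0 < M) (hε : 0 < ε)
    (hδ1 : ‖b - β‖ ≤ 1)
    (hδ2 : ‖b - β‖ * ‖e‖ ^ 2 ≤ β e e / 2)
    (hδ3 : ‖b - β‖ * ((C₀ * (2 * (‖β‖ + 1) * ‖e‖ / β e e) ^ 2 + 1) * M * (β e e + ‖e‖ ^ 2))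
      * (M + ε) ≤ ε * β e e)
    (hlt : genEigenvalue a e k b < ENNReal.ofReal M) :
    genEigenvalue a e k β ≤ ENNReal.ofReal (M + ε) := by
  have hδ0 : (0:ℝ) ≤ ‖b - β‖ := ContinuousLinearMap.opNorm_nonneg _
  set δ := ‖b - β‖ with hδdef
  set C₁ := C₀ * (2 * (‖β‖ + 1) * ‖e‖ / β e e) ^ 2 + 1 with hC₁def
  clear_value δ C₁
  have hC₁pos : 0 < C₁ := by
    have := mul_nonneg hC₀ (sq_nonneg (2 * (‖β‖ + 1) * ‖e‖ / β e e))
    rw [hC₁def]; linarith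
  -- b e e ≥ β e e / 2
  have hee : ‖e‖ ^ 2 = ‖e‖ * ‖e‖ := sq ‖e‖
  have hbee : β e e / 2 ≤ b e e := by
    have h := (abs_le.mp (opnorm_bound b β e e)).1
    rw [← hδdef] at h
    linarith
  have hbe : 0 < b e e := lt_of_lt_of_le (by linarith) hbee
  -- extract V
  simp only [genEigenvalue] at hlt
  obtain ⟨V, hlt⟩ := iInf_lt_iff.mp hlt
  obtain ⟨⟨hVk, hVb⟩, hS⟩ := iInf_lt_iff.mp hlt
  -- the projection map
  set T : H →ₗ[ℝ] H :=
    LinearMap.id - (β e e)⁻¹ • ((β e : H →ₗ[ℝ] ℝ).smulRight e) with hTdef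
  have hT : ∀ x : H, T x = x - ((β e e)⁻¹ * β e x) • e := by
    intro x
    simp [hTdef, LinearMap.smulRight_apply, smul_smul]
  -- per-φ facts
  have hmain : ∀ φ : H, φ ∈ V → φ ≠ 0 →
      0 < a φ φ ∧ 0 < b φ φ ∧ a φ φ ≤ M * b φ φ ∧ ‖φ‖ ^ 2 ≤ C₁ * M * b φ φ := by
    intro φ hφV hφ0
    have hq : rayleighQuot (a φ φ) (b φ φ) ≤ ENNReal.ofReal M := by
      refine le_of_lt (lt_of_le_of_lt ?_ hS)
      exact le_iSup₂ (f := fun ψ (_ : ψ ∈ V ∧ ψ ≠ 0) => rayleighQuot (a ψ ψ) (b ψ ψ))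
        φ ⟨hφV, hφ0⟩
    set ℓ : H →L[ℝ] ℝ := (b e e)⁻¹ • (b e) with hℓdef
    have hℓe : ℓ e = 1 := by
      simp only [hℓdef, ContinuousLinearMap.smul_apply, smul_eq_mul]
      exact inv_mul_cancel₀ hbe.ne'
    have hℓφ : ℓ φ = 0 := by
      simp only [hℓdef, ContinuousLinearMap.smul_apply, smul_eq_mul, hVb φ hφV, mul_zero]
    have hpoin := hP ℓ hℓe φ hℓφ
    have hℓnorm : ‖ℓ‖ ≤ 2 * (‖β‖ + 1) * ‖e‖ / β e e := by
      have h1 : ‖ℓ‖ ≤ (b e e)⁻¹ * ‖b e‖ := by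
        have h := norm_smul_le ((b e e)⁻¹) (b e)
        rw [Real.norm_eq_abs, abs_of_pos (inv_pos.mpr hbe)] at h
        exact h
      have hbn : ‖b‖ ≤ ‖β‖ + 1 := by
        have h5 := norm_sub_norm_le b β
        linarith
      have h2 : ‖b e‖ ≤ (‖β‖ + 1) * ‖e‖ := by
        have h4 := b.le_opNorm e
        have h6 := mul_le_mul_of_nonneg_right hbn (norm_nonneg e)
        linarith
      have h3 : (b e e)⁻¹ ≤ 2 / β e e := by
        have := inv_anti₀ (half_pos hβe) hbee
        rwa [show (β e e / 2)⁻¹ = 2 / β e e by rw [inv_div]] at this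
      calc ‖ℓ‖ ≤ (b e e)⁻¹ * ‖b e‖ := h1
        _ ≤ (2 / β e e) * ((‖β‖ + 1) * ‖e‖) :=
            mul_le_mul h3 h2 (ContinuousLinearMap.opNorm_nonneg _) (by positivity)
        _ = 2 * (‖β‖ + 1) * ‖e‖ / β e e := by ring
    have hsq : ‖ℓ‖ ^ 2 ≤ (2 * (‖β‖ + 1) * ‖e‖ / β e e) ^ 2 :=
      pow_le_pow_left₀ (norm_nonneg _) hℓnorm 2
    have hC₁le : C₀ * ‖ℓ‖ ^ 2 + 1 ≤ C₁ := by
      have := mul_le_mul_of_nonneg_left hsq hC₀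
      rw [hC₁def]; linarith
    have hN : ‖φ‖ ^ 2 ≤ C₁ * a φ φ :=
      le_trans hpoin (mul_le_mul_of_nonneg_right hC₁le (ha_nonneg φ))
    have hNpos : 0 < ‖φ‖ ^ 2 := pow_pos (norm_pos_iff.mpr hφ0) 2
    have hA : 0 < a φ φ := by
      by_contra hcon
      push_neg at hcon
      have : C₁ * a φ φ ≤ 0 := mul_nonpos_iff.mpr (Or.inl ⟨hC₁pos.le, hcon⟩)
      linarith
    have hb0 : b φ φ ≠ 0 := by
      intro h
      rw [rayleighQuot, if_pos h, if_neg hA.ne'] at hq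
      exact ENNReal.ofReal_ne_top (top_le_iff.mp hq)
    have hb : 0 < b φ φ := (hb_nonneg φ).lt_of_ne (Ne.symm hb0)
    rw [rayleighQuot, if_neg hb0] at hq
    have hdiv : a φ φ / b φ φ ≤ M := (ENNReal.ofReal_le_ofReal_iff hM.le).mp hq
    have hab : a φ φ ≤ M * b φ φ := (div_le_iff₀ hb).mp hdiv
    refine ⟨hA, hb, hab, ?_⟩
    calc ‖φ‖ ^ 2 ≤ C₁ * a φ φ := hN
      _ ≤ C₁ * (M * b φ φ) := mul_le_mul_of_nonneg_left hab hC₁pos.le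
      _ = C₁ * M * b φ φ := by ring
  -- injectivity of T on V
  have hinj : ∀ φ ∈ V, T φ = 0 → φ = 0 := by
    intro φ hφV h0
    rw [hT φ, sub_eq_zero] at h0
    obtain ⟨c, hc⟩ : ∃ c : ℝ, φ = c • e := ⟨_, h0⟩
    have hb0 : b e φ = 0 := hVb φ hφV
    rw [hc, map_smul, smul_eq_mul] at hb0
    rcases mul_eq_zero.mp hb0 with h | h
    · rw [hc, h, zero_smul]
    · exact absurd h hbe.ne'
  have hfinj : Function.Injective (T ∘ₗ V.subtype) := by
    intro x y hxy
    have hsub : T ((x : H) - (y : H)) = 0 := by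
      rw [map_sub, sub_eq_zero]
      exact hxy
    have := hinj ((x : H) - (y : H)) (V.sub_mem x.2 y.2) hsub
    exact Subtype.ext (by rwa [sub_eq_zero] at this)
  have hW : Module.finrank ℝ (Submodule.map T V) = k := by
    have h1 := LinearMap.finrank_range_of_inj hfinj
    rw [LinearMap.range_comp, Submodule.range_subtype] at h1
    rw [h1, hVk]
  have hWβ : ∀ ψ ∈ Submodule.map T V, β e ψ = 0 := by
    rintro ψ ⟨φ, hφV, rfl⟩
    rw [hT φ, map_sub, map_smul, smul_eq_mul]
    field_simp
    ring
  -- conclude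
  simp only [genEigenvalue]
  refine le_trans (iInf₂_le (Submodule.map T V) ⟨hW, hWβ⟩) (iSup₂_le ?_)
  rintro ψ ⟨hψW, hψ0⟩
  obtain ⟨φ, hφV, hTφ⟩ := hψW
  have hφ0 : φ ≠ 0 := by
    rintro rfl
    rw [map_zero] at hTφ
    exact hψ0 hTφ.symm
  obtain ⟨hA, hb, hab, hNb⟩ := hmain φ hφV hφ0
  set c := (β e e)⁻¹ * β e φ with hc
  have hψeq : ψ = φ - c • e := by rw [← hTφ, hT φ]
  have haψ : a ψ ψ = a φ φ := by
    rw [hψeq, bilin_expand, ha_symm φ e, he φ, he e]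
    ring
  have hc2 : c * β e e = β e φ := by
    rw [hc]
    field_simp
  have hβψ : β ψ ψ * β e e = β φ φ * β e e - β e φ * β e φ := by
    rw [hψeq, bilin_expand, hβ_symm φ e]
    linear_combination (c * β e e - β e φ) * hc2
  have hNN : ‖φ‖ ^ 2 = ‖φ‖ * ‖φ‖ := sq ‖φ‖
  have hq_bound : |β e φ| ≤ δ * ‖e‖ * ‖φ‖ := by
    have h := opnorm_bound b β e φ
    rw [hVb φ hφV, zero_sub, abs_neg, ← hδdef] at h
    exact h
  have hP_bound : |b φ φ - β φ φ| ≤ δ * ‖φ‖ * ‖φ‖ := by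
    have h := opnorm_bound b β φ φ
    rwa [← hδdef] at h
  have s0 : β e φ * β e φ ≤ (δ * ‖e‖ * ‖φ‖) * (δ * ‖e‖ * ‖φ‖) := by
    have := mul_self_le_mul_self (abs_nonneg (β e φ)) hq_bound
    rwa [abs_mul_abs_self] at this
  have s1 : (δ * ‖e‖ * ‖φ‖) * (δ * ‖e‖ * ‖φ‖) ≤ δ * (‖e‖ ^ 2 * ‖φ‖ ^ 2) := by
    linarith [mul_nonneg (mul_nonneg (mul_nonneg hδ0 (sub_nonneg.mpr hδ1)) (sq_nonneg ‖e‖))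
      (sq_nonneg ‖φ‖)]
  have hPge : b φ φ - δ * ‖φ‖ ^ 2 ≤ β φ φ := by
    have h := (abs_le.mp hP_bound).2
    linarith
  have t1 : (b φ φ - δ * ‖φ‖ ^ 2) * β e e ≤ β φ φ * β e e :=
    mul_le_mul_of_nonneg_right hPge hβe.le
  have s2 : b φ φ * β e e - δ * ‖φ‖ ^ 2 * β e e - δ * (‖e‖ ^ 2 * ‖φ‖ ^ 2) ≤ β ψ ψ * β e e := by
    linarith [le_trans s0 s1, t1, hβψ]
  have s4 : δ * ‖φ‖ ^ 2 * (β e e + ‖e‖ ^ 2) ≤ δ * (C₁ * M * b φ φ) * (β e e + ‖e‖ ^ 2) := by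
    have hx : (0:ℝ) ≤ β e e + ‖e‖ ^ 2 := by positivity
    have h2 := mul_le_mul_of_nonneg_right (mul_le_mul_of_nonneg_left hNb hδ0) hx
    linarith
  have s5 : (M + ε) * (δ * (C₁ * M * b φ φ) * (β e e + ‖e‖ ^ 2)) ≤ ε * β e e * b φ φ := by
    have h := mul_le_mul_of_nonneg_right hδ3 hb.le
    linarith
  have hkey : M * (b φ φ * β e e) ≤ (M + ε) * (β ψ ψ * β e e) := by
    have t2 : b φ φ * β e e - δ * ‖φ‖ ^ 2 * (β e e + ‖e‖ ^ 2) ≤ β ψ ψ * β e e := by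
      linarith [s2]
    have t3 := mul_le_mul_of_nonneg_left t2 (show (0:ℝ) ≤ M + ε by linarith)
    have t4 : (M + ε) * (δ * ‖φ‖ ^ 2 * (β e e + ‖e‖ ^ 2)) ≤ ε * β e e * b φ φ :=
      le_trans (mul_le_mul_of_nonneg_left s4 (by linarith)) s5
    linarith [t3, t4]
  have hβψpos : 0 < β ψ ψ := by
    by_contra hcon
    push_neg at hcon
    have h1 : β ψ ψ * β e e ≤ 0 := mul_nonpos_iff.mpr (Or.inr ⟨hcon, hβe.le⟩)
    have h2 : 0 < M * (b φ φ * β e e) := mul_pos hM (mul_pos hb hβe)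
    have h3 : (M + ε) * (β ψ ψ * β e e) ≤ 0 :=
      mul_nonpos_iff.mpr (Or.inl ⟨by linarith, h1⟩)
    linarith
  have hfinal : a ψ ψ ≤ (M + ε) * β ψ ψ := by
    have h1 : a ψ ψ * β e e ≤ M * (b φ φ * β e e) := by
      rw [haψ]
      linarith [mul_le_mul_of_nonneg_right hab hβe.le]
    have h2 : a ψ ψ * β e e ≤ ((M + ε) * β ψ ψ) * β e e := by linarith [hkey]
    exact le_of_mul_le_mul_right h2 hβe
  rw [rayleighQuot, if_neg hβψpos.ne']
  exact ENNReal.ofReal_le_ofReal ((div_le_iff₀ hβψpos).mpr hfinal)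

/-- Abstract fixed-metric form of Proposition 1.1, lower semicontinuity on the
finiteness set: if `‖β_n − β‖ → 0` and `limsup λ_k(β_n) < +∞`, then
`λ_k(β) ≤ liminf λ_k(β_n)`. -/
theorem stmt1 {H : Type*} [NormedAddCommGroup H] [InnerProductSpace ℝ H] [CompleteSpace H]
    (a : H →L[ℝ] H →L[ℝ] ℝ)
    (ha_symm : ∀ φ ψ : H, a φ ψ = a ψ φ)
    (ha_nonneg : ∀ φ : H, 0 ≤ a φ φ)
    (ha_le : ∀ φ : H, a φ φ ≤ ‖φ‖ ^ 2)
    (e : H) (he : ∀ ψ : H, a e ψ = 0)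
    (hPoincare : PoincareHyp a e)
    (k : ℕ) (hk : 1 ≤ k)
    (β : H →L[ℝ] H →L[ℝ] ℝ) (βn : ℕ → H →L[ℝ] H →L[ℝ] ℝ)
    (hβ_symm : ∀ φ ψ : H, β φ ψ = β ψ φ)
    (hβ_nonneg : ∀ φ : H, 0 ≤ β φ φ)
    (hβn_symm : ∀ n, ∀ φ ψ : H, βn n φ ψ = βn n ψ φ)
    (hβn_nonneg : ∀ n, ∀ φ : H, 0 ≤ βn n φ φ)
    (hβe : 0 < β e e) (hβne : ∀ n, 0 < βn n e e)
    (hconv : Filter.Tendsto (fun n => ‖βn n - β‖) Filter.atTop (nhds 0))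
    (hfin : Filter.limsup (fun n => genEigenvalue a e k (βn n)) Filter.atTop < ⊤) :
    genEigenvalue a e k β
      ≤ Filter.liminf (fun n => genEigenvalue a e k (βn n)) Filter.atTop := by
  obtain ⟨C₀, hC₀, hP⟩ := hPoincare
  set L := Filter.liminf (fun n => genEigenvalue a e k (βn n)) Filter.atTop with hLdef
  have hLtop : L ≠ ⊤ := (lt_of_le_of_lt (Filter.liminf_le_limsup (by isBoundedDefault) (by isBoundedDefault)) hfin).ne
  refine ENNReal.le_of_forall_pos_le_add fun ε hεpos hLlt => ?_
  set εr : ℝ := (ε : ℝ) / 2 with hεr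
  have hεr0 : 0 < εr := by
    have : (0:ℝ) < ε := hεpos
    rw [hεr]; linarith
  set M : ℝ := L.toReal + εr with hMdef
  have hM0 : 0 < M := by
    have := ENNReal.toReal_nonneg (a := L)
    rw [hMdef]; linarith
  have he0 : e ≠ 0 := by
    intro h
    rw [h] at hβe
    simp at hβe
  have hE : 0 < ‖e‖ := norm_pos_iff.mpr he0
  set C₁ := C₀ * (2 * (‖β‖ + 1) * ‖e‖ / β e e) ^ 2 + 1 with hC₁
  have hC₁0 : 0 < C₁ := by
    have := mul_nonneg hC₀ (sq_nonneg (2 * (‖β‖ + 1) * ‖e‖ / β e e))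
    rw [hC₁]; linarith
  have hBE : (0:ℝ) < β e e + ‖e‖ ^ 2 := by linarith [sq_nonneg ‖e‖]
  set D := C₁ * M * (β e e + ‖e‖ ^ 2) * (M + εr) with hD
  have hD0 : 0 < D := by
    rw [hD]
    exact mul_pos (mul_pos (mul_pos hC₁0 hM0) hBE) (by linarith)
  set δ : ℝ := min (min 1 (β e e / (2 * (‖e‖ ^ 2 + 1)))) (εr * β e e / (D + 1)) with hδ
  have hδpos : 0 < δ :=
    lt_min (lt_min one_pos (div_pos hβe (by positivity)))
      (div_pos (mul_pos hεr0 hβe) (by linarith))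
  have hfreq : ∃ᶠ n in Filter.atTop, genEigenvalue a e k (βn n) < ENNReal.ofReal M := by
    refine Filter.frequently_lt_of_liminf_lt (by isBoundedDefault) ?_
    calc L = ENNReal.ofReal L.toReal := (ENNReal.ofReal_toReal hLtop).symm
      _ < ENNReal.ofReal M := by
        rw [ENNReal.ofReal_lt_ofReal_iff hM0]
        rw [hMdef]; linarith
  have hev : ∀ᶠ n in Filter.atTop, ‖βn n - β‖ ≤ δ :=
    (hconv.eventually_lt_const hδpos).mono fun n h => h.le
  obtain ⟨n, hn_lt, hn_norm⟩ := (hfreq.and_eventually hev).exists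
  have hδ1 : ‖βn n - β‖ ≤ 1 :=
    le_trans hn_norm (le_trans (min_le_left _ _) (min_le_left _ _))
  have hδ2 : ‖βn n - β‖ * ‖e‖ ^ 2 ≤ β e e / 2 := by
    have h := le_trans hn_norm (le_trans (min_le_left _ _) (min_le_right _ _))
    have h2 : ‖βn n - β‖ * (2 * (‖e‖ ^ 2 + 1)) ≤ β e e :=
      (le_div_iff₀ (by positivity)).mp h
    linarith [ContinuousLinearMap.opNorm_nonneg (βn n - β)]
  have hδ3 : ‖βn n - β‖ * (C₁ * M * (β e e + ‖e‖ ^ 2)) * (M + εr) ≤ εr * β e e := by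
    have h := le_trans hn_norm (min_le_right _ _)
    have h3 : ‖βn n - β‖ * (D + 1) ≤ εr * β e e :=
      (le_div_iff₀ (by linarith)).mp h
    rw [hD] at h3
    linarith [ContinuousLinearMap.opNorm_nonneg (βn n - β)]
  have hkey := key a ha_symm ha_nonneg e he C₀ hC₀ hP k hk β (βn n) hβ_symm hβe
    (hβn_nonneg n) M εr hM0 hεr0 hδ1 hδ2 (by rw [← hC₁]; exact hδ3) hn_lt
  calc genEigenvalue a e k β ≤ ENNReal.ofReal (M + εr) := hkey
    _ = ENNReal.ofReal (L.toReal + (ε : ℝ)) := by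
        rw [hMdef, hεr]; ring_nf
    _ = ENNReal.ofReal L.toReal + ENNReal.ofReal (ε : ℝ) :=
        ENNReal.ofReal_add ENNReal.toReal_nonneg ε.coe_nonneg
    _ = L + ε := by rw [ENNReal.ofReal_toReal hLtop, ENNReal.ofReal_coe_nnreal]
end

section
/- (Logarithmic bound on circle averages, from the proof of Claim 3.1.) Let φ : ℝ² → ℝ be continuously differentiable on a neighborhood of the closed unit disk. Then for every 0 < r ≤ 1: |f(1) − f(r)| ≤ ( ln(1/r) / (2π) )^{1/2} · ( ∫_{A_r} ‖∇φ(x)‖² dx )^{1/2}. -/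
open MeasureTheory

/-- The average of `φ` over the circle of radius `r` centered at the origin. -/
noncomputable def circleAvg (φ : EuclideanSpace ℝ (Fin 2) → ℝ) (r : ℝ) : ℝ :=
  (1 / (2 * Real.pi)) *
    ∫ θ in (0:ℝ)..(2 * Real.pi), φ !₂[r * Real.cos θ, r * Real.sin θ]

open MeasureTheory Real Set

noncomputable section Stmt6Aux

abbrev E2 := EuclideanSpace ℝ (Fin 2)

def nv (θ : ℝ) : E2 := !₂[Real.cos θ, Real.sin θ]

def Wp (p : ℝ × ℝ) : E2 := !₂[p.1 * Real.cos p.2, p.1 * Real.sin p.2]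

lemma Wp_eq (p : ℝ × ℝ) : Wp p = p.1 • nv p.2 := by
  ext i
  fin_cases i <;> simp [Wp, nv]

lemma norm_nv (θ : ℝ) : ‖nv θ‖ = 1 := by
  rw [EuclideanSpace.norm_eq]
  simp [nv, Fin.sum_univ_two, Real.sin_sq_add_cos_sq, Real.cos_sq_add_sin_sq]

lemma norm_Wp (p : ℝ × ℝ) : ‖Wp p‖ = |p.1| := by
  rw [Wp_eq, norm_smul, norm_nv, mul_one]
  rfl

lemma continuous_Wp : Continuous Wp := by
  simp only [funext Wp_eq]
  refine continuous_fst.smul ?_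
  have : Continuous fun θ : ℝ => (nv θ : Fin 2 → ℝ) := by
    unfold nv
    refine continuous_pi fun i => ?_
    fin_cases i <;> simp <;> fun_prop
  exact (PiLp.continuous_toLp 2 (fun _ : Fin 2 => ℝ)).comp (this.comp continuous_snd)

lemma continuous_nv : Continuous nv := by
  have : Continuous fun θ : ℝ => (nv θ : Fin 2 → ℝ) := by
    unfold nv
    refine continuous_pi fun i => ?_
    fin_cases i <;> simp <;> fun_prop
  exact (PiLp.continuous_toLp 2 (fun _ : Fin 2 => ℝ)).comp this

lemma polarCoord_symm_eq (p : ℝ × ℝ) :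
    polarCoord.symm p = (p.1 * Real.cos p.2, p.1 * Real.sin p.2) := rfl

def mE : E2 ≃ᵐ ℝ × ℝ :=
  (MeasurableEquiv.toLp 2 (Fin 2 → ℝ)).symm.trans MeasurableEquiv.finTwoArrow

lemma mp_mE : MeasurePreserving mE :=
  (volume_preserving_finTwoArrow ℝ).comp (EuclideanSpace.volume_preserving_symm_measurableEquiv_toLp (Fin 2))

lemma mE_symm_apply (p : ℝ × ℝ) : mE.symm p = !₂[p.1, p.2] := by
  ext i
  fin_cases i <;> rfl

lemma mE_symm_polar (p : ℝ × ℝ) : mE.symm (polarCoord.symm p) = Wp p := by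
  rw [polarCoord_symm_apply, mE_symm_apply]
  rfl

end Stmt6Aux

/-- Logarithmic bound on circle averages, from the proof of Claim 3.1: for `φ`
continuously differentiable on a neighborhood of the closed unit disk and `0 < r ≤ 1`,
`|f(1) − f(r)| ≤ (ln(1/r)/(2π))^{1/2} (∫_{A_r} ‖∇φ‖²)^{1/2}`. -/
theorem stmt6 (φ : EuclideanSpace ℝ (Fin 2) → ℝ) (U : Set (EuclideanSpace ℝ (Fin 2)))
    (hU : IsOpen U) (hUball : Metric.closedBall 0 1 ⊆ U)
    (hφ : ContDiffOn ℝ 1 φ U)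
    (r : ℝ) (hr0 : 0 < r) (hr1 : r ≤ 1) :
    |circleAvg φ 1 - circleAvg φ r|
      ≤ Real.sqrt (Real.log (1 / r) / (2 * Real.pi)) *
          Real.sqrt (∫ x in {x : EuclideanSpace ℝ (Fin 2) | r < ‖x‖ ∧ ‖x‖ < 1},
            ‖gradient φ x‖ ^ 2) := by
  have hπ : (0:ℝ) < π := Real.pi_pos
  set Ar : Set E2 := {x : E2 | r < ‖x‖ ∧ ‖x‖ < 1} with hAr
  set S : Set (ℝ × ℝ) := Ioo r 1 ×ˢ Ioo (-π) π with hS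
  set T : Set (ℝ × ℝ) := Ioo (-π) π ×ˢ Ioo r 1 with hT
  set G : E2 → ℝ := fun x => ‖gradient φ x‖ with hG
  set D : ℝ × ℝ → ℝ := fun p => (inner ℝ (gradient φ (Wp p)) (nv p.2) : ℝ) with hD
  -- membership facts
  have hUsub : ∀ {x : E2}, ‖x‖ ≤ 1 → x ∈ U := by
    intro x hx
    exact hUball (by simpa [Metric.mem_closedBall, dist_zero_right] using hx)
  have hWpU : ∀ {p : ℝ × ℝ}, |p.1| ≤ 1 → Wp p ∈ U := by
    intro p hp
    exact hUsub (by rw [norm_Wp]; exact hp)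
  -- differentiability and continuity facts
  have hdiff : ∀ {x : E2}, x ∈ U →
      HasFDerivAt φ ((InnerProductSpace.toDual ℝ E2) (gradient φ x)) x := by
    intro x hx
    exact (((hφ.differentiableOn one_ne_zero).differentiableAt
      (hU.mem_nhds hx)).hasGradientAt).hasFDerivAt
  have hgcont : ContinuousOn (gradient φ) U := by
    have h1 : ContinuousOn (fderiv ℝ φ) U := hφ.continuousOn_fderiv_of_isOpen hU le_rfl
    exact (InnerProductSpace.toDual ℝ E2).symm.continuous.comp_continuousOn h1
  have hGmeas : Measurable G := by
    have h1 : Measurable (fderiv ℝ φ) := measurable_fderiv ℝ φ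
    exact ((InnerProductSpace.toDual ℝ E2).symm.continuous.measurable.comp h1).norm
  have hgm : Measurable (gradient φ) := by
    have h1 : Measurable (fderiv ℝ φ) := measurable_fderiv ℝ φ
    exact (InnerProductSpace.toDual ℝ E2).symm.continuous.measurable.comp h1
  have hDmeas : Measurable D := by
    exact (hgm.comp continuous_Wp.measurable).inner
      ((continuous_nv.comp continuous_snd).measurable)
  -- integrability on S and T
  have hIntS : ∀ f : ℝ × ℝ → ℝ, ContinuousOn f (Icc r 1 ×ˢ Icc (-π) π) →
      IntegrableOn f S := by
    intro f hf
    exact (hf.integrableOn_compact (isCompact_Icc.prod isCompact_Icc)).mono_set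
      (Set.prod_mono Ioo_subset_Icc_self Ioo_subset_Icc_self)
  have hIntT : ∀ f : ℝ × ℝ → ℝ, ContinuousOn f (Icc (-π) π ×ˢ Icc r 1) →
      IntegrableOn f T := by
    intro f hf
    exact (hf.integrableOn_compact (isCompact_Icc.prod isCompact_Icc)).mono_set
      (Set.prod_mono Ioo_subset_Icc_self Ioo_subset_Icc_self)
  have hGWcontS : ContinuousOn (fun p => G (Wp p)) (Icc r 1 ×ˢ Icc (-π) π) := by
    refine (hgcont.comp continuous_Wp.continuousOn ?_).norm
    rintro p ⟨hp1, -⟩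
    exact hWpU (abs_le.2 ⟨by linarith [hp1.1], hp1.2⟩)
  have hDswapcontT : ContinuousOn (fun p => D (Prod.swap p)) (Icc (-π) π ×ˢ Icc r 1) := by
    refine ContinuousOn.inner ?_ ((continuous_nv.comp continuous_fst).continuousOn)
    refine hgcont.comp (continuous_Wp.comp continuous_swap).continuousOn ?_
    rintro p ⟨-, hp2⟩
    refine hWpU (p := p.swap) ?_
    rw [Prod.fst_swap]
    exact abs_le.2 ⟨by linarith [hp2.1], hp2.2⟩
  -- step 1: shift the angle interval and apply FTC
  have hWθ : ∀ a : ℝ, |a| ≤ 1 → Continuous fun θ : ℝ => φ (Wp (a, θ)) := by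
    intro a ha
    refine hφ.continuousOn.comp_continuous
      (continuous_Wp.comp (Continuous.prodMk_right a)) fun θ => hWpU ha
  have h0cont : Continuous fun θ : ℝ => φ (Wp (1, θ)) - φ (Wp (r, θ)) :=
    (hWθ 1 (by simp)).sub (hWθ r (abs_le.2 ⟨by linarith, hr1⟩))
  have hper : Function.Periodic (fun θ : ℝ => φ (Wp (1, θ)) - φ (Wp (r, θ))) (2*π) := by
    intro θ
    simp [Wp, Real.cos_add_two_pi, Real.sin_add_two_pi]
  have hΔ : circleAvg φ 1 - circleAvg φ r
      = (1/(2*π)) * ∫ θ in (-π)..π, (φ (Wp (1, θ)) - φ (Wp (r, θ))) := by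
    have i1 : IntervalIntegrable (fun θ : ℝ => φ (Wp (1, θ))) volume 0 (2*π) :=
      (hWθ 1 (by simp)).intervalIntegrable _ _
    have i2 : IntervalIntegrable (fun θ : ℝ => φ (Wp (r, θ))) volume 0 (2*π) :=
      (hWθ r (abs_le.2 ⟨by linarith, hr1⟩)).intervalIntegrable _ _
    have hsub : (∫ θ in (0:ℝ)..(2*π), (φ (Wp (1, θ)) - φ (Wp (r, θ))))
        = (∫ θ in (0:ℝ)..(2*π), φ (Wp (1, θ))) - ∫ θ in (0:ℝ)..(2*π), φ (Wp (r, θ)) :=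
      intervalIntegral.integral_sub i1 i2
    have hshift := hper.intervalIntegral_add_eq 0 (-π)
    rw [zero_add] at hshift
    rw [show -π + 2*π = π by ring] at hshift
    rw [← hshift, hsub, circleAvg, circleAvg, ← mul_sub]
    rfl
  have hFTC : ∀ θ : ℝ, φ (Wp (1, θ)) - φ (Wp (r, θ)) = ∫ s in r..1, D (s, θ) := by
    intro θ
    have hderiv : ∀ s ∈ uIcc r 1, HasDerivAt (fun t => φ (Wp (t, θ))) (D (s, θ)) s := by
      intro s hs
      rw [uIcc_of_le hr1] at hs
      have habs : |s| ≤ 1 := abs_le.2 ⟨by linarith [hs.1], hs.2⟩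
      have hc : HasDerivAt (fun t : ℝ => Wp (t, θ)) (nv θ) s := by
        simp only [funext fun t => Wp_eq (t, θ)]
        simpa using (hasDerivAt_id s).smul_const (nv θ)
      have h2 := (hdiff (hWpU habs)).comp_hasDerivAt s hc
      exact h2
    have hint : IntervalIntegrable (fun s => D (s, θ)) volume r 1 := by
      apply ContinuousOn.intervalIntegrable
      rw [uIcc_of_le hr1]
      refine ContinuousOn.inner ?_
        ((continuous_nv.comp (continuous_const : Continuous fun _ : ℝ => θ)).continuousOn)
      refine hgcont.comp (continuous_Wp.comp ?_).continuousOn ?_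
      · exact continuous_id.prodMk continuous_const
      · intro s hs
        exact hWpU (abs_le.2 ⟨by linarith [hs.1], hs.2⟩)
    exact (intervalIntegral.integral_eq_sub_of_hasDerivAt hderiv hint).symm
  have hΔ2 : circleAvg φ 1 - circleAvg φ r
      = (1/(2*π)) * ∫ θ in (-π)..π, (∫ s in r..1, D (s, θ)) := by
    rw [hΔ]
    congr 1
    exact intervalIntegral.integral_congr fun θ _ => hFTC θ
  -- step 2: iterated → product
  have e1 : (∫ θ in (-π)..π, (∫ s in r..1, D (s, θ)))
      = ∫ p in T, D (Prod.swap p) := by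
    rw [intervalIntegral.integral_of_le (by linarith : -π ≤ π), integral_Ioc_eq_integral_Ioo]
    simp only [intervalIntegral.integral_of_le hr1, integral_Ioc_eq_integral_Ioo]
    rw [hT, (Measure.volume_eq_prod ℝ ℝ)]
    exact (setIntegral_prod _ (by rw [← (Measure.volume_eq_prod ℝ ℝ), ← hT]; exact hIntT _ hDswapcontT)).symm
  -- step 3: bound by the gradient norm on the product set
  have e3 : |∫ p in T, D (Prod.swap p)| ≤ ∫ p in T, G (Wp (Prod.swap p)) := by
    rw [← Real.norm_eq_abs]
    refine norm_integral_le_of_norm_le (hIntT _ ?_) (ae_of_all _ fun p => ?_)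
    · exact hGWcontS.comp continuous_swap.continuousOn fun p hp => ⟨hp.2, hp.1⟩
    · rw [Real.norm_eq_abs]
      refine (abs_real_inner_le_norm _ _).trans ?_
      rw [norm_nv, mul_one]
  have e4 : (∫ p in T, G (Wp (Prod.swap p))) = ∫ p in S, G (Wp p) := by
    have hTr : volume.restrict T
        = (volume.restrict (Ioo (-π) π)).prod (volume.restrict (Ioo r 1)) := by
      rw [hT, Measure.volume_eq_prod ℝ ℝ, Measure.prod_restrict]
    have hSr : volume.restrict S
        = (volume.restrict (Ioo r 1)).prod (volume.restrict (Ioo (-π) π)) := by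
      rw [hS, Measure.volume_eq_prod ℝ ℝ, Measure.prod_restrict]
    rw [hTr, hSr]
    exact Measure.measurePreserving_swap.integral_comp
      (MeasurableEquiv.prodComm : ℝ × ℝ ≃ᵐ ℝ × ℝ).measurableEmbedding
      (fun p => G (Wp p))
  -- step 4: Cauchy-Schwarz
  have hSmeas : MeasurableSet S := measurableSet_Ioo.prod measurableSet_Ioo
  have hCS : (∫ p in S, G (Wp p))
      ≤ Real.sqrt (∫ p in S, 1/p.1) * Real.sqrt (∫ p in S, p.1 * G (Wp p) ^ 2) := by
    haveI : IsFiniteMeasure (volume.restrict S) := by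
      constructor
      rw [Measure.restrict_apply_univ]
      refine lt_of_le_of_lt (measure_mono (Set.prod_mono Ioo_subset_Icc_self
        Ioo_subset_Icc_self : S ⊆ Icc r 1 ×ˢ Icc (-π) π)) ?_
      exact (isCompact_Icc.prod isCompact_Icc).measure_lt_top
    have hpq : Real.HolderConjugate 2 2 := Real.HolderConjugate.two_two
    set u : ℝ × ℝ → ℝ := fun p => (Real.sqrt p.1)⁻¹ with hu
    set v : ℝ × ℝ → ℝ := fun p => Real.sqrt p.1 * G (Wp p) with hv
    have hGWm : Measurable fun p : ℝ × ℝ => G (Wp p) := hGmeas.comp continuous_Wp.measurable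
    have hum : AEStronglyMeasurable u (volume.restrict S) :=
      ((Real.continuous_sqrt.measurable.comp measurable_fst).inv).aestronglyMeasurable
    have hvm : AEStronglyMeasurable v (volume.restrict S) :=
      ((Real.continuous_sqrt.measurable.comp measurable_fst).mul hGWm).aestronglyMeasurable
    obtain ⟨M, hM⟩ := (isCompact_closedBall (0:E2) 1).exists_bound_of_continuousOn
      (hgcont.mono hUball)
    have hMemu : MemLp u (ENNReal.ofReal 2) (volume.restrict S) := by
      refine MemLp.of_bound hum ((Real.sqrt r)⁻¹) ?_
      rw [ae_restrict_iff' hSmeas]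
      refine ae_of_all _ fun p hp => ?_
      rw [Real.norm_eq_abs, abs_of_nonneg (by positivity)]
      exact inv_anti₀ (Real.sqrt_pos.2 hr0) (Real.sqrt_le_sqrt hp.1.1.le)
    have hMemv : MemLp v (ENNReal.ofReal 2) (volume.restrict S) := by
      refine MemLp.of_bound hvm M ?_
      rw [ae_restrict_iff' hSmeas]
      refine ae_of_all _ fun p hp => ?_
      have hWb : Wp p ∈ Metric.closedBall (0:E2) 1 := by
        rw [Metric.mem_closedBall, dist_zero_right, norm_Wp]
        exact abs_le.2 ⟨by linarith [hp.1.1], hp.1.2.le⟩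
      have h1 : Real.sqrt p.1 ≤ 1 := by
        rw [show (1:ℝ) = Real.sqrt 1 by simp]
        exact Real.sqrt_le_sqrt hp.1.2.le
      rw [Real.norm_eq_abs, abs_of_nonneg (by positivity)]
      calc Real.sqrt p.1 * G (Wp p) ≤ 1 * G (Wp p) :=
            mul_le_mul_of_nonneg_right h1 (norm_nonneg _)
        _ = G (Wp p) := one_mul _
        _ ≤ M := hM _ hWb
    have key := integral_mul_le_Lp_mul_Lq_of_nonneg hpq
      (ae_of_all _ fun p => by positivity : 0 ≤ᵐ[volume.restrict S] u)
      (ae_of_all _ fun p => by positivity : 0 ≤ᵐ[volume.restrict S] v) hMemu hMemv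
    have huv : (∫ p in S, u p * v p) = ∫ p in S, G (Wp p) := by
      refine setIntegral_congr_fun hSmeas fun p hp => ?_
      have : Real.sqrt p.1 ≠ 0 := ne_of_gt (Real.sqrt_pos.2 (hr0.trans hp.1.1))
      simp only [hu, hv]
      rw [← mul_assoc, inv_mul_cancel₀ this, one_mul]
    have hu2 : (∫ p in S, u p ^ (2:ℝ)) = ∫ p in S, 1/p.1 := by
      refine setIntegral_congr_fun hSmeas fun p hp => ?_
      have hp0 : (0:ℝ) ≤ p.1 := (hr0.trans hp.1.1).le
      rw [show (2:ℝ) = ((2:ℕ):ℝ) by norm_num, Real.rpow_natCast, hu]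
      rw [inv_pow, Real.sq_sqrt hp0, one_div]
    have hv2 : (∫ p in S, v p ^ (2:ℝ)) = ∫ p in S, p.1 * G (Wp p) ^ 2 := by
      refine setIntegral_congr_fun hSmeas fun p hp => ?_
      have hp0 : (0:ℝ) ≤ p.1 := (hr0.trans hp.1.1).le
      rw [show (2:ℝ) = ((2:ℕ):ℝ) by norm_num, Real.rpow_natCast, hv]
      rw [mul_pow, Real.sq_sqrt hp0]
    rw [huv, hu2, hv2] at key
    have h1nn : 0 ≤ ∫ p in S, 1/p.1 :=
      setIntegral_nonneg hSmeas fun p hp => by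
        have h : (0:ℝ) < p.1 := hr0.trans hp.1.1
        positivity
    have h2nn : 0 ≤ ∫ p in S, p.1 * G (Wp p) ^ 2 :=
      setIntegral_nonneg hSmeas fun p hp => by
        have h : (0:ℝ) < p.1 := hr0.trans hp.1.1
        positivity
    calc (∫ p in S, G (Wp p))
        ≤ (∫ p in S, 1/p.1) ^ ((1:ℝ)/2) * (∫ p in S, p.1 * G (Wp p) ^ 2) ^ ((1:ℝ)/2) := key
      _ = _ := by rw [← Real.sqrt_eq_rpow, ← Real.sqrt_eq_rpow]
  -- step 5: the two integrals
  have hA : (∫ p in S, 1/p.1) = Real.log (1/r) * (2*π) := by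
    have h := setIntegral_prod_mul (μ := volume) (ν := volume)
      (fun s : ℝ => 1/s) (fun _ : ℝ => (1:ℝ)) (Ioo r 1) (Ioo (-π) π)
    simp only [mul_one] at h
    have h1 : (∫ s in Ioo r 1, 1/s) = Real.log (1/r) := by
      rw [← integral_Ioc_eq_integral_Ioo, ← intervalIntegral.integral_of_le hr1]
      rw [integral_one_div]
      intro h0
      rw [uIcc_of_le hr1] at h0
      linarith [h0.1]
    have h2 : (∫ θ in Ioo (-π) π, (1:ℝ)) = 2*π := by
      simp [Real.volume_Ioo]
      rw [max_eq_left (by positivity)]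
      ring
    rw [hS, Measure.volume_eq_prod ℝ ℝ, h, h1, h2]
  have hB : (∫ p in S, p.1 * G (Wp p) ^ 2) = ∫ x in Ar, ‖gradient φ x‖ ^ 2 := by
    have hArmeas : MeasurableSet Ar := by
      have : IsOpen Ar :=
        (isOpen_lt continuous_const continuous_norm).inter
          (isOpen_lt continuous_norm continuous_const)
      exact this.measurableSet
    set A' : Set (ℝ × ℝ) := mE.symm ⁻¹' Ar with hA'
    have hA'meas : MeasurableSet A' := mE.symm.measurable hArmeas
    set k : ℝ × ℝ → ℝ := fun p => ‖gradient φ (mE.symm p)‖ ^ 2 with hk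
    have mpE' : MeasurePreserving (⇑mE.symm) volume volume := mp_mE.symm mE
    have step1 : (∫ p in A', k p) = ∫ x in Ar, ‖gradient φ x‖ ^ 2 :=
      mpE'.setIntegral_preimage_emb mE.symm.measurableEmbedding
        (fun x => ‖gradient φ x‖ ^ 2) Ar
    have step2 := integral_comp_polarCoord_symm (A'.indicator k)
    rw [MeasureTheory.integral_indicator hA'meas] at step2
    set B' : Set (ℝ × ℝ) := Wp ⁻¹' Ar with hB'
    have hB'meas : MeasurableSet B' := continuous_Wp.measurable hArmeas
    have hBA : ∀ p : ℝ × ℝ, polarCoord.symm p ∈ A' ↔ p ∈ B' := by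
      intro p
      rw [hA', hB', Set.mem_preimage, Set.mem_preimage, mE_symm_polar]
    have hpt : ∀ p : ℝ × ℝ, p.1 • (A'.indicator k) (polarCoord.symm p)
        = B'.indicator (fun q => q.1 * k (polarCoord.symm q)) p := by
      intro p
      by_cases h : p ∈ B'
      · rw [Set.indicator_of_mem ((hBA p).2 h), Set.indicator_of_mem h, smul_eq_mul]
      · rw [Set.indicator_of_notMem (fun hmem => h ((hBA p).1 hmem)),
          Set.indicator_of_notMem h, smul_zero]
    simp only [hpt] at step2
    rw [setIntegral_indicator hB'meas] at step2
    have hTB : polarCoord.target ∩ B' = S := by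
      ext p
      constructor
      · rintro ⟨hpt2, hpb⟩
        obtain ⟨hp1, hp2⟩ := hpt2
        rw [hB', Set.mem_preimage, hAr, Set.mem_setOf_eq, norm_Wp,
          abs_of_pos (Set.mem_Ioi.1 hp1)] at hpb
        exact ⟨⟨hpb.1, hpb.2⟩, hp2⟩
      · rintro ⟨hp1, hp2⟩
        have hp1' : 0 < p.1 := hr0.trans hp1.1
        refine ⟨⟨Set.mem_Ioi.2 hp1', hp2⟩, ?_⟩
        rw [hB', Set.mem_preimage, hAr, Set.mem_setOf_eq, norm_Wp, abs_of_pos hp1']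
        exact ⟨hp1.1, hp1.2⟩
    rw [hTB] at step2
    rw [← step1, ← step2]
    refine setIntegral_congr_fun hSmeas fun p hp => ?_
    simp only [hk, hG, mE_symm_polar]
  -- final assembly
  have hL0 : 0 ≤ Real.log (1/r) := Real.log_nonneg (by rw [le_div_iff₀ hr0]; linarith)
  calc |circleAvg φ 1 - circleAvg φ r|
      = (1/(2*π)) * |∫ p in T, D (Prod.swap p)| := by
        rw [hΔ2, e1, abs_mul, abs_of_pos (by positivity)]
    _ ≤ (1/(2*π)) * (Real.sqrt (Real.log (1/r) * (2*π)) *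
          Real.sqrt (∫ x in Ar, ‖gradient φ x‖ ^ 2)) := by
        refine mul_le_mul_of_nonneg_left ?_ (by positivity)
        calc |∫ p in T, D (Prod.swap p)| ≤ ∫ p in T, G (Wp (Prod.swap p)) := e3
          _ = ∫ p in S, G (Wp p) := e4
          _ ≤ _ := by rw [← hA, ← hB]; exact hCS
    _ = Real.sqrt (Real.log (1/r) / (2*π)) *
          Real.sqrt (∫ x in Ar, ‖gradient φ x‖ ^ 2) := by
        have ha : (0:ℝ) < Real.sqrt (2*π) := Real.sqrt_pos.2 (by positivity)
        have ha2 : Real.sqrt (2*π) * Real.sqrt (2*π) = 2*π :=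
          Real.mul_self_sqrt (by positivity)
        rw [Real.sqrt_mul hL0, Real.sqrt_div hL0, one_div, inv_mul_eq_div,
          div_mul_eq_mul_div, div_eq_div_iff (by positivity) (ne_of_gt ha)]
        linear_combination (Real.sqrt (Real.log (1/r)) *
          Real.sqrt (∫ x in Ar, ‖gradient φ x‖^2)) * ha2
end

section
/- (Per-mode case of Lemma 3.1, Karpukhin–Kusner–McGrath–Stern extension estimate.) For every integer k ≥ 1, every real l > 0 and all reals a, b: (1 − 4 e^{−l}) ∫_{|z|<1} ‖∇u(z)‖² dz ≤ ∫₀^{l/2} ∫₀^{2π} ‖∇ψ(θ,s)‖² dθ ds, where u(z) = a·Re(z^k) + b·Im(z^k) and ψ(θ,s) = ( e^{ks}/(1+e^{kl}) + e^{−ks}/(1+e^{−kl}) ) (a cos(kθ) + b sin(kθ)). -/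
open MeasureTheory

open Real intervalIntegral

lemma cosInt (n : ℕ) (hn : n ≠ 0) : ∫ θ in (0:ℝ)..(2*Real.pi), Real.cos ((n:ℝ)*θ) = 0 := by
  have h1 : (n:ℝ) * (2*Real.pi) = ((2*n : ℕ):ℝ) * Real.pi := by push_cast; ring
  rw [intervalIntegral.integral_comp_mul_left Real.cos (by exact_mod_cast hn), integral_cos,
    mul_zero, Real.sin_zero, h1, Real.sin_nat_mul_pi]
  simp

lemma sinInt (n : ℕ) (hn : n ≠ 0) : ∫ θ in (0:ℝ)..(2*Real.pi), Real.sin ((n:ℝ)*θ) = 0 := by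
  rw [intervalIntegral.integral_comp_mul_left Real.sin (by exact_mod_cast hn)]
  simp [integral_sin, Real.cos_nat_mul_two_pi]

lemma trigInt (A B : ℝ) (n : ℕ) (hn : n ≠ 0) :
    ∫ θ in (0:ℝ)..(2*Real.pi), (A * Real.cos ((n:ℝ)*θ) + B * Real.sin ((n:ℝ)*θ))^2
      = Real.pi * (A^2+B^2) := by
  have hptw : ∀ θ : ℝ, (A * Real.cos ((n:ℝ)*θ) + B * Real.sin ((n:ℝ)*θ))^2
      = (A^2+B^2)/2 + ((A^2-B^2)/2 * Real.cos (((2*n : ℕ):ℝ)*θ) + A*B * Real.sin (((2*n : ℕ):ℝ)*θ)) := by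
    intro θ
    have h1 : ((2*n : ℕ):ℝ)*θ = 2 * ((n:ℝ)*θ) := by push_cast; ring
    rw [h1, Real.cos_two_mul, Real.sin_two_mul]
    have h2 := Real.sin_sq_add_cos_sq ((n:ℝ)*θ)
    nlinarith [h2]
  simp only [hptw]
  have i1 : IntervalIntegrable (fun θ : ℝ => (A^2-B^2)/2 * Real.cos (((2*n : ℕ):ℝ)*θ)) volume 0 (2*Real.pi) :=
    (Continuous.intervalIntegrable (by fun_prop) _ _)
  have i2 : IntervalIntegrable (fun θ : ℝ => A*B * Real.sin (((2*n : ℕ):ℝ)*θ)) volume 0 (2*Real.pi) :=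
    (Continuous.intervalIntegrable (by fun_prop) _ _)
  rw [intervalIntegral.integral_add (intervalIntegrable_const) (i1.add i2),
    intervalIntegral.integral_add i1 i2, intervalIntegral.integral_const_mul,
    intervalIntegral.integral_const_mul, cosInt _ (by omega), sinInt _ (by omega)]
  simp
  ring

lemma ballInt (k : ℕ) (hk : 1 ≤ k) :
    ∫ z in Metric.ball (0:ℂ) 1, ‖z‖ ^ (2*k - 2) = Real.pi / k := by
  obtain ⟨j, rfl⟩ : ∃ j, k = j + 1 := ⟨k - 1, (Nat.succ_pred_eq_of_pos hk).symm⟩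
  simp only [show 2*(j+1) - 2 = 2*j from by omega]
  set f : ℝ → ℝ := Set.indicator (Set.Iio 1) (fun r => r ^ (2*j)) with hf
  have h1 : ∫ z in Metric.ball (0:ℂ) 1, ‖z‖ ^ (2*j) = ∫ z : ℂ, f ‖z‖ := by
    rw [← MeasureTheory.integral_indicator measurableSet_ball]
    congr 1; funext z
    classical
    rw [hf, Set.indicator_apply, Set.indicator_apply]
    simp only [mem_ball_zero_iff, Set.mem_Iio]
  rw [h1, MeasureTheory.integral_fun_norm_addHaar volume f, Complex.finrank_real_complex]
  have h2 : ∫ y in Set.Ioi (0:ℝ), y ^ (2-1) • f y = 1 / (2*j+2) := by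
    have h3 : ∀ y : ℝ, y ^ (2-1) • f y = Set.indicator (Set.Iio 1) (fun r => r ^ (2*j+1)) y := by
      intro y
      by_cases h : y < 1 <;>
        simp [hf, Set.indicator_apply, Set.mem_Iio, h, pow_succ, mul_comm]
    simp only [h3]
    rw [MeasureTheory.setIntegral_indicator measurableSet_Iio, Set.Ioi_inter_Iio,
      ← MeasureTheory.integral_Ioc_eq_integral_Ioo,
      ← intervalIntegral.integral_of_le (by norm_num : (0:ℝ) ≤ 1), integral_pow]
    norm_num; ring
  rw [h2, measureReal_def, Complex.volume_ball]
  simp [nsmul_eq_mul, smul_eq_mul]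
  field_simp

set_option maxHeartbeats 1000000 in
/-- Per-mode case of Lemma 3.1 (Karpukhin–Kusner–McGrath–Stern extension estimate):
`(1 − 4e^{−l}) ∫_{|z|<1} ‖∇u‖² ≤ ∫₀^{l/2} ∫₀^{2π} ‖∇ψ‖² dθ ds`, where `u` is the harmonic
extension of `a cos kθ + b sin kθ` to the unit disk and `ψ` its harmonic extension to the
cylinder of length `l/2` with Neumann condition at the far end. -/
theorem stmt11 (k : ℕ) (hk : 1 ≤ k) (l : ℝ) (hl : 0 < l) (a b : ℝ)
    (u : ℂ → ℝ)
    (hu : ∀ z : ℂ, u z = a * (z ^ k).re + b * (z ^ k).im)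
    (ψ : ℝ → ℝ → ℝ)
    (hψ : ∀ θ s : ℝ, ψ θ s =
      (Real.exp (k * s) / (1 + Real.exp (k * l))
        + Real.exp (-(k * s)) / (1 + Real.exp (-(k * l))))
      * (a * Real.cos (k * θ) + b * Real.sin (k * θ))) :
    (1 - 4 * Real.exp (-l)) * ∫ z in Metric.ball (0:ℂ) 1, ‖fderiv ℝ u z‖ ^ 2
      ≤ ∫ s in (0:ℝ)..(l / 2), ∫ θ in (0:ℝ)..(2 * Real.pi),
          ((deriv (fun θ' => ψ θ' s) θ) ^ 2 + (deriv (fun s' => ψ θ s') s) ^ 2) := by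
  have hK0 : (0:ℝ) < (k:ℝ) := by exact_mod_cast Nat.pos_of_ne_zero (by omega)
  have hK1 : (1:ℝ) ≤ (k:ℝ) := by exact_mod_cast hk
  -- ## Disk side
  set c : ℂ := (a:ℂ) - (b:ℂ) * Complex.I with hcdef
  have hcre : c.re = a := by simp [hcdef]
  have hcim : c.im = -b := by simp [hcdef]
  have hud : ∀ z : ℂ, HasFDerivAt u
      (Complex.reCLM.comp ((ContinuousLinearMap.smulRight (1 : ℂ →L[ℂ] ℂ)
        (c * ((k:ℂ) * z ^ (k-1)))).restrictScalars ℝ)) z := by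
    intro z
    have h1 : HasDerivAt (fun w : ℂ => c * w ^ k) (c * ((k:ℂ) * z ^ (k-1))) z :=
      (hasDerivAt_pow k z).const_mul c
    have h2 := (Complex.reCLM.hasFDerivAt).comp z (h1.hasFDerivAt.restrictScalars ℝ)
    have h3 : (⇑Complex.reCLM ∘ fun w : ℂ => c * w ^ k) = u := by
      funext w
      simp only [Function.comp_apply, Complex.reCLM_apply, hu w, Complex.mul_re, hcre, hcim]
      ring
    rwa [h3] at h2
  have hbd : ∀ z : ℂ, ‖fderiv ℝ u z‖^2 ≤ (k:ℝ)^2 * (a^2+b^2) * ‖z‖^(2*k-2) := by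
    intro z
    rw [(hud z).fderiv]
    have hb1 : ‖Complex.reCLM.comp ((ContinuousLinearMap.smulRight (1 : ℂ →L[ℂ] ℂ)
        (c * ((k:ℂ) * z ^ (k-1)))).restrictScalars ℝ)‖ ≤ ‖c‖ * ((k:ℝ) * ‖z‖^(k-1)) := by
      apply ContinuousLinearMap.opNorm_le_bound _ (by positivity)
      intro h
      simp only [ContinuousLinearMap.coe_comp', Function.comp_apply,
        ContinuousLinearMap.coe_restrictScalars', ContinuousLinearMap.smulRight_apply,
        ContinuousLinearMap.one_apply, smul_eq_mul, Complex.reCLM_apply]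
      have e1 : |(h * (c * ((k:ℂ) * z^(k-1)))).re| ≤ ‖h * (c * ((k:ℂ) * z^(k-1)))‖ := by
        exact Complex.abs_re_le_norm _
      have e2 : ‖h * (c * ((k:ℂ) * z^(k-1)))‖ = ‖c‖ * ((k:ℝ) * ‖z‖^(k-1)) * ‖h‖ := by
        simp [norm_mul, norm_pow]; ring
      rw [Real.norm_eq_abs]
      exact e1.trans (le_of_eq e2)
    have hsq : ‖c‖^2 = a^2 + b^2 := by
      rw [Complex.sq_norm, Complex.normSq_apply, hcre, hcim]; ring
    calc ‖Complex.reCLM.comp ((ContinuousLinearMap.smulRight (1 : ℂ →L[ℂ] ℂ)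
            (c * ((k:ℂ) * z ^ (k-1)))).restrictScalars ℝ)‖^2
        ≤ (‖c‖ * ((k:ℝ) * ‖z‖^(k-1)))^2 := by
          apply pow_le_pow_left₀ (norm_nonneg _) hb1
      _ = (k:ℝ)^2 * (a^2+b^2) * ‖z‖^(2*k-2) := by
          rw [mul_pow, mul_pow, hsq, ← pow_mul, show (k-1)*2 = 2*k-2 from by omega]
          ring
  have hD : ∫ z in Metric.ball (0:ℂ) 1, ‖fderiv ℝ u z‖^2 ≤ Real.pi * (k:ℝ) * (a^2+b^2) := by
    have hgc : Continuous (fun z : ℂ => (k:ℝ)^2*(a^2+b^2)*‖z‖^(2*k-2)) :=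
      continuous_const.mul (continuous_norm.pow _)
    have hgint : IntegrableOn (fun z : ℂ => (k:ℝ)^2*(a^2+b^2)*‖z‖^(2*k-2)) (Metric.ball 0 1) volume :=
      (hgc.continuousOn.integrableOn_compact (isCompact_closedBall 0 1)).mono_set
        Metric.ball_subset_closedBall
    calc ∫ z in Metric.ball (0:ℂ) 1, ‖fderiv ℝ u z‖^2
        ≤ ∫ z in Metric.ball (0:ℂ) 1, (k:ℝ)^2*(a^2+b^2)*‖z‖^(2*k-2) := by
          apply integral_mono_of_nonneg (Filter.Eventually.of_forall fun z => by positivity)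
            hgint (Filter.Eventually.of_forall fun z => hbd z)
      _ = (k:ℝ)^2*(a^2+b^2) * (Real.pi / k) := by
          rw [MeasureTheory.integral_const_mul, ballInt k hk]
      _ = Real.pi * (k:ℝ) * (a^2+b^2) := by field_simp
  -- ## Cylinder side
  set φ : ℝ → ℝ := fun s => Real.exp ((k:ℝ)*s)/(1+Real.exp ((k:ℝ)*l))
      + Real.exp (-((k:ℝ)*s))/(1+Real.exp (-((k:ℝ)*l))) with hφdef
  set φd : ℝ → ℝ := fun s => ((k:ℝ) * Real.exp ((k:ℝ)*s))/(1+Real.exp ((k:ℝ)*l))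
      - ((k:ℝ) * Real.exp (-((k:ℝ)*s)))/(1+Real.exp (-((k:ℝ)*l))) with hφddef
  have hφ : ∀ s, HasDerivAt φ (φd s) s := by
    intro s
    have h1 : HasDerivAt (fun s : ℝ => (k:ℝ)*s) ((k:ℝ)*1) s := (hasDerivAt_id s).const_mul _
    have h2 : HasDerivAt (fun s : ℝ => Real.exp ((k:ℝ)*s)) (Real.exp ((k:ℝ)*s) * ((k:ℝ)*1)) s :=
      (Real.hasDerivAt_exp _).comp s h1
    have h4 : HasDerivAt (fun s : ℝ => Real.exp (-((k:ℝ)*s))) (Real.exp (-((k:ℝ)*s)) * -((k:ℝ)*1)) s :=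
      (Real.hasDerivAt_exp _).comp s h1.neg
    have h5 := (h2.div_const (1+Real.exp ((k:ℝ)*l))).add (h4.div_const (1+Real.exp (-((k:ℝ)*l))))
    rw [hφdef, hφddef]
    exact h5.congr_deriv (by beta_reduce; ring)
  have hF : ∀ θ, HasDerivAt (fun θ : ℝ => a * Real.cos ((k:ℝ)*θ) + b * Real.sin ((k:ℝ)*θ))
      ((k:ℝ) * (b * Real.cos ((k:ℝ)*θ) + (-a) * Real.sin ((k:ℝ)*θ))) θ := by
    intro θ
    have h1 : HasDerivAt (fun θ : ℝ => (k:ℝ)*θ) ((k:ℝ)*1) θ := (hasDerivAt_id θ).const_mul _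
    have h2 := (Real.hasDerivAt_cos ((k:ℝ)*θ)).comp θ h1
    have h3 := (Real.hasDerivAt_sin ((k:ℝ)*θ)).comp θ h1
    have h4 := (h2.const_mul a).add (h3.const_mul b)
    exact h4.congr_deriv (by ring)
  have hdθ : ∀ s θ, deriv (fun θ' => ψ θ' s) θ
      = φ s * ((k:ℝ) * (b * Real.cos ((k:ℝ)*θ) + (-a) * Real.sin ((k:ℝ)*θ))) := by
    intro s θ
    have he : (fun θ' => ψ θ' s)
        = fun θ' => φ s * (a * Real.cos ((k:ℝ)*θ') + b * Real.sin ((k:ℝ)*θ')) := by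
      funext θ'; rw [hψ]
    rw [he]
    exact ((hF θ).const_mul (φ s)).deriv
  have hds : ∀ θ s, deriv (fun s' => ψ θ s') s
      = φd s * (a * Real.cos ((k:ℝ)*θ) + b * Real.sin ((k:ℝ)*θ)) := by
    intro θ s
    have he : (fun s' => ψ θ s')
        = fun s' => φ s' * (a * Real.cos ((k:ℝ)*θ) + b * Real.sin ((k:ℝ)*θ)) := by
      funext s'; rw [hψ]
    rw [he]
    exact ((hφ s).mul_const _).deriv
  have hinner : ∀ s, (∫ θ in (0:ℝ)..(2*Real.pi),
        ((deriv (fun θ' => ψ θ' s) θ) ^ 2 + (deriv (fun s' => ψ θ s') s) ^ 2))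
      = Real.pi * (a^2+b^2) * (((k:ℝ) * φ s)^2 + (φd s)^2) := by
    intro s
    have h1 : ∀ θ : ℝ, (deriv (fun θ' => ψ θ' s) θ)^2 + (deriv (fun s' => ψ θ s') s)^2
        = (φ s * (k:ℝ))^2 * (b * Real.cos ((k:ℝ)*θ) + (-a) * Real.sin ((k:ℝ)*θ))^2
          + (φd s)^2 * (a * Real.cos ((k:ℝ)*θ) + b * Real.sin ((k:ℝ)*θ))^2 := by
      intro θ; rw [hdθ, hds]; ring
    simp only [h1]
    have i1 : IntervalIntegrable (fun θ : ℝ => (φ s * (k:ℝ))^2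
        * (b * Real.cos ((k:ℝ)*θ) + (-a) * Real.sin ((k:ℝ)*θ))^2) volume 0 (2*Real.pi) :=
      (Continuous.intervalIntegrable (by fun_prop) _ _)
    have i2 : IntervalIntegrable (fun θ : ℝ => (φd s)^2
        * (a * Real.cos ((k:ℝ)*θ) + b * Real.sin ((k:ℝ)*θ))^2) volume 0 (2*Real.pi) :=
      (Continuous.intervalIntegrable (by fun_prop) _ _)
    rw [intervalIntegral.integral_add i1 i2, intervalIntegral.integral_const_mul,
      intervalIntegral.integral_const_mul, trigInt b (-a) k (by omega), trigInt a b k (by omega)]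
    ring
  have hP0 : (0:ℝ) < 1 + Real.exp ((k:ℝ)*l) := by positivity
  have hQ0 : (0:ℝ) < 1 + Real.exp (-((k:ℝ)*l)) := by positivity
  have hiden : ∀ s : ℝ, Real.pi * (a^2+b^2) * (((k:ℝ) * φ s)^2 + (φd s)^2)
      = (Real.pi * (a^2+b^2) * (2*(k:ℝ)^2) / (1+Real.exp ((k:ℝ)*l))^2) * Real.exp (2*(k:ℝ)*s)
        + (Real.pi * (a^2+b^2) * (2*(k:ℝ)^2) / (1+Real.exp (-((k:ℝ)*l)))^2) * Real.exp (-(2*(k:ℝ))*s) := by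
    intro s
    have hx : Real.exp (2*(k:ℝ)*s) = Real.exp ((k:ℝ)*s) * Real.exp ((k:ℝ)*s) := by
      rw [← Real.exp_add]; ring_nf
    have hy : Real.exp (-(2*(k:ℝ))*s) = Real.exp (-((k:ℝ)*s)) * Real.exp (-((k:ℝ)*s)) := by
      rw [← Real.exp_add]; ring_nf
    simp only [hφdef, hφddef]
    rw [hx, hy]
    field_simp
    ring
  have h2K : (2*(k:ℝ)) ≠ 0 := by positivity
  have hI1 : ∫ s in (0:ℝ)..(l/2), Real.exp (2*(k:ℝ)*s) = (Real.exp ((k:ℝ)*l) - 1)/(2*(k:ℝ)) := by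
    rw [intervalIntegral.integral_comp_mul_left Real.exp h2K, integral_exp, mul_zero,
      Real.exp_zero, show (2*(k:ℝ))*(l/2) = (k:ℝ)*l from by ring, smul_eq_mul]
    field_simp
  have hI2 : ∫ s in (0:ℝ)..(l/2), Real.exp (-(2*(k:ℝ))*s) = (1 - Real.exp (-((k:ℝ)*l)))/(2*(k:ℝ)) := by
    rw [intervalIntegral.integral_comp_mul_left Real.exp (neg_ne_zero.mpr h2K), integral_exp,
      mul_zero, Real.exp_zero, show (-(2*(k:ℝ)))*(l/2) = -((k:ℝ)*l) from by ring, smul_eq_mul]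
    field_simp
    ring
  have hRHS : (∫ s in (0:ℝ)..(l / 2), ∫ θ in (0:ℝ)..(2 * Real.pi),
        ((deriv (fun θ' => ψ θ' s) θ) ^ 2 + (deriv (fun s' => ψ θ s') s) ^ 2))
      = Real.pi * (a^2+b^2) * (k:ℝ)
        * ((Real.exp ((k:ℝ)*l) - 1)/(Real.exp ((k:ℝ)*l) + 1)) := by
    rw [intervalIntegral.integral_congr (g := fun s =>
      (Real.pi * (a^2+b^2) * (2*(k:ℝ)^2) / (1+Real.exp ((k:ℝ)*l))^2) * Real.exp (2*(k:ℝ)*s)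
        + (Real.pi * (a^2+b^2) * (2*(k:ℝ)^2) / (1+Real.exp (-((k:ℝ)*l)))^2) * Real.exp (-(2*(k:ℝ))*s))
      (fun s _ => by rw [hinner s, hiden s])]
    have j1 : IntervalIntegrable (fun s : ℝ =>
        (Real.pi * (a^2+b^2) * (2*(k:ℝ)^2) / (1+Real.exp ((k:ℝ)*l))^2) * Real.exp (2*(k:ℝ)*s))
        volume 0 (l/2) := (Continuous.intervalIntegrable (by fun_prop) _ _)
    have j2 : IntervalIntegrable (fun s : ℝ =>
        (Real.pi * (a^2+b^2) * (2*(k:ℝ)^2) / (1+Real.exp (-((k:ℝ)*l)))^2) * Real.exp (-(2*(k:ℝ))*s))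
        volume 0 (l/2) := (Continuous.intervalIntegrable (by fun_prop) _ _)
    rw [intervalIntegral.integral_add j1 j2, intervalIntegral.integral_const_mul,
      intervalIntegral.integral_const_mul, hI1, hI2]
    have hE0 : (0:ℝ) < Real.exp ((k:ℝ)*l) := Real.exp_pos _
    rw [Real.exp_neg]
    field_simp
    ring
  rw [hRHS]
  -- ## final comparison
  have hE1 : Real.exp l ≤ Real.exp ((k:ℝ)*l) := Real.exp_le_exp.2 (by nlinarith)
  have hexpl : 1 < Real.exp l := by
    have := Real.add_one_le_exp l; linarith
  have hE0 : (0:ℝ) < Real.exp ((k:ℝ)*l) := Real.exp_pos _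
  have hDpos : 0 ≤ ∫ z in Metric.ball (0:ℂ) 1, ‖fderiv ℝ u z‖^2 :=
    setIntegral_nonneg measurableSet_ball fun z _ => by positivity
  have hM0 : (0:ℝ) ≤ Real.pi * (k:ℝ) * (a^2+b^2) := by positivity
  rcases le_or_gt (1 - 4*Real.exp (-l)) 0 with hc | hc
  · have h1 : (1 - 4*Real.exp (-l)) * ∫ z in Metric.ball (0:ℂ) 1, ‖fderiv ℝ u z‖^2 ≤ 0 :=
      mul_nonpos_of_nonpos_of_nonneg hc hDpos
    have h2 : (0:ℝ) ≤ Real.pi * (a^2+b^2) * (k:ℝ)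
        * ((Real.exp ((k:ℝ)*l) - 1)/(Real.exp ((k:ℝ)*l) + 1)) := by
      apply mul_nonneg (by positivity)
      apply div_nonneg (by linarith) (by linarith)
    linarith
  · have hr : 1 - 4*Real.exp (-l) ≤ (Real.exp ((k:ℝ)*l) - 1)/(Real.exp ((k:ℝ)*l) + 1) := by
      rw [le_div_iff₀ (by linarith)]
      have hmul : Real.exp (-l) * Real.exp l = 1 := by rw [← Real.exp_add]; simp
      nlinarith [mul_le_mul_of_nonneg_left hE1 (Real.exp_pos (-l)).le, Real.exp_pos (-l)]
    calc (1 - 4*Real.exp (-l)) * ∫ z in Metric.ball (0:ℂ) 1, ‖fderiv ℝ u z‖^2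
        ≤ (1 - 4*Real.exp (-l)) * (Real.pi * (k:ℝ) * (a^2+b^2)) :=
          mul_le_mul_of_nonneg_left hD hc.le
      _ ≤ Real.pi * (a^2+b^2) * (k:ℝ)
            * ((Real.exp ((k:ℝ)*l) - 1)/(Real.exp ((k:ℝ)*l) + 1)) := by
          have h9 := mul_le_mul_of_nonneg_left hr hM0
          nlinarith [h9]
end

section
/- (L² lower bound for harmonic Fourier modes of frequency n ≥ 2 on an annulus, from Step 2 of the proof of Proposition 3.2.) There exists ε₀ ∈ (0, 1/2] such that for every integer n ≥ 2, every ε ∈ (0, ε₀], and all reals c, d: ∫_ε^1 (c rⁿ + d r^{−n})² r dr ≥ (1/4) ( c²/(2n+2) + d² ε^{2−2n}/(2n−2) ). -/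
open MeasureTheory

private lemma aux64 : ∀ n : ℕ, 2 ≤ n → 4*(n:ℝ)^2 ≤ 8^(2*n-2) := by
  intro n hn
  induction n, hn using Nat.le_induction with
  | base => norm_num
  | succ k hk ih =>
    have h1 : 2*(k+1)-2 = (2*k-2) + 2 := by omega
    rw [h1, pow_add]
    have hk1 : (1:ℝ) ≤ (k:ℝ) := by exact_mod_cast Nat.one_le_of_lt hk
    push_cast
    nlinarith [ih]

private lemma auxquad (a b t c d : ℝ) (hb : 0 ≤ b) (ht0 : 0 ≤ t) (ht1 : t ≤ 1) :
    0 ≤ (1/2)*c^2*b + (1/2)*a^2*b*d^2 + c*d*t*(a*b) := by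
  nlinarith [mul_nonneg (mul_nonneg hb ht0) (sq_nonneg (c + a*d)),
    mul_nonneg (mul_nonneg hb (by linarith : (0:ℝ) ≤ 1 - t)) (sq_nonneg c),
    mul_nonneg (mul_nonneg hb (by linarith : (0:ℝ) ≤ 1 - t)) (sq_nonneg (a*d))]

private lemma auxint (n : ℕ) (hn : 2 ≤ n) (ε : ℝ) (hε : 0 < ε) (hε1 : ε ≤ 1/8) (c d : ℝ) :
    ∫ r in ε..1, (c * r ^ n + d * r ^ (-(n:ℤ))) ^ 2 * r
      = c^2 * (1 - ε^(2*n+2)) / (2*(n:ℝ)+2) + c*d*(1-ε^2)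
        + d^2 * (ε^((2:ℤ)-2*(n:ℤ)) - 1) / (2*(n:ℝ)-2) := by
  have h0 : (0:ℝ) ∉ Set.uIcc ε 1 := by
    rw [Set.uIcc_of_le (by linarith)]
    intro h; exact absurd (h.1) (by linarith)
  have hcong : ∀ r ∈ Set.uIcc ε 1,
      (c * r ^ n + d * r ^ (-(n:ℤ))) ^ 2 * r
      = c^2 * r^((2*(n:ℤ)+1)) + (2*c*d) * r^((1:ℤ)) + d^2 * r^((1:ℤ)-2*n) := by
    intro r hr
    rw [Set.uIcc_of_le (by linarith)] at hr
    have hr0 : r ≠ 0 := by intro h; exact absurd h (by intro h'; nlinarith [hr.1])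
    have h1 : r ^ (-(n:ℤ)) = (r^n)⁻¹ := by rw [zpow_neg, zpow_natCast]
    have h2 : r ^ ((2*(n:ℤ)+1)) = r^(2*n+1) := by
      rw [show 2*(n:ℤ)+1 = ((2*n+1 : ℕ) : ℤ) by push_cast; ring, zpow_natCast]
    have h3 : r ^ ((1:ℤ)-2*n) = r / r^(2*n) := by
      rw [show (1:ℤ)-2*n = (1:ℤ) - ((2*n:ℕ):ℤ) by push_cast; ring, zpow_sub₀ hr0,
        zpow_one, zpow_natCast]
    rw [h1, h2, h3, zpow_one]
    field_simp
    ring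
  rw [intervalIntegral.integral_congr hcong]
  have hi1 : IntervalIntegrable (fun r : ℝ => c^2 * r^((2*(n:ℤ)+1))) volume ε 1 :=
    (intervalIntegral.intervalIntegrable_zpow (Or.inr h0)).const_mul _
  have hi2 : IntervalIntegrable (fun r : ℝ => (2*c*d) * r^((1:ℤ))) volume ε 1 :=
    (intervalIntegral.intervalIntegrable_zpow (Or.inr h0)).const_mul _
  have hi3 : IntervalIntegrable (fun r : ℝ => d^2 * r^((1:ℤ)-2*n)) volume ε 1 :=
    (intervalIntegral.intervalIntegrable_zpow (Or.inr h0)).const_mul _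
  rw [intervalIntegral.integral_add (hi1.add hi2) hi3, intervalIntegral.integral_add hi1 hi2,
    intervalIntegral.integral_const_mul, intervalIntegral.integral_const_mul,
    intervalIntegral.integral_const_mul,
    integral_zpow (Or.inr ⟨by omega, h0⟩), integral_zpow (Or.inr ⟨by omega, h0⟩),
    integral_zpow (Or.inr ⟨by omega, h0⟩)]
  have e1 : ε ^ (2*(n:ℤ)+1+1) = ε ^ (2*n+2) := by
    rw [show 2*(n:ℤ)+1+1 = ((2*n+2:ℕ):ℤ) by push_cast; ring, zpow_natCast]
  have e2 : ε ^ ((1:ℤ)+1) = ε^2 := by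
    rw [show ((1:ℤ)+1 : ℤ) = ((2:ℕ):ℤ) from rfl, zpow_natCast]
  have e3 : ε ^ ((1:ℤ)-2*n+1) = ε ^ ((2:ℤ)-2*n) := by ring_nf
  rw [e1, e2, e3]
  have hn2 : ((2:ℝ)*n - 2) ≠ 0 := by
    have : (2:ℝ) ≤ n := by exact_mod_cast hn
    linarith
  have e4 : (1 - ε^((2:ℤ)-2*(n:ℤ))) / ((((1:ℤ)-2*(n:ℤ) : ℤ):ℝ) + 1)
      = (ε^((2:ℤ)-2*(n:ℤ)) - 1)/(2*(n:ℝ)-2) := by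
    rw [show (((((1:ℤ)-2*(n:ℤ) : ℤ)):ℝ) + 1) = -(2*(n:ℝ)-2) by push_cast; ring,
      div_neg, ← neg_div, neg_sub]
  simp only [one_zpow]
  rw [e4]
  push_cast
  ring

private lemma auxineq (n : ℕ) (hn : 2 ≤ n) (ε : ℝ) (hε : 0 < ε) (hε1 : ε ≤ 1/8) (c d : ℝ) :
    (1 / 4) * (c ^ 2 / (2 * (n:ℝ) + 2)
          + d ^ 2 * ε ^ ((2:ℤ) - 2 * (n:ℤ)) / (2 * (n:ℝ) - 2))
      ≤ c^2 * (1 - ε^(2*n+2)) / (2*(n:ℝ)+2) + c*d*(1-ε^2)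
        + d^2 * (ε^((2:ℤ)-2*(n:ℤ)) - 1) / (2*(n:ℝ)-2) := by
  have hnr : (2:ℝ) ≤ (n:ℝ) := by exact_mod_cast hn
  set a : ℝ := 2*(n:ℝ)+2 with ha_def
  set b : ℝ := 2*(n:ℝ)-2 with hb_def
  have ha : 0 < a := by simp [ha_def]; linarith
  have hb : 0 < b := by simp [hb_def]; linarith
  set E : ℝ := ε ^ ((2:ℤ) - 2*(n:ℤ)) with hE_def
  set P : ℝ := ε ^ (2*n+2) with hP_def
  have hEeq : E = (ε ^ (2*n-2))⁻¹ := by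
    rw [hE_def, show (2:ℤ) - 2*(n:ℤ) = -((2*n-2 : ℕ) : ℤ) by
      push_cast [Nat.cast_sub (by omega : 2 ≤ 2*n)]; ring, zpow_neg, zpow_natCast]
  have hE8 : (8:ℝ)^(2*n-2) ≤ E := by
    rw [hEeq]
    have h1 : ε ^ (2*n-2) ≤ ((8:ℝ)⁻¹) ^ (2*n-2) :=
      pow_le_pow_left₀ hε.le (by rw [show ((8:ℝ))⁻¹ = 1/8 by norm_num]; exact hε1) _
    have h2 := inv_anti₀ (pow_pos hε _) h1
    rwa [← inv_pow, inv_inv] at h2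
  have habE : a * b ≤ E := by
    have : a * b ≤ 4*(n:ℝ)^2 := by rw [ha_def, hb_def]; nlinarith
    linarith [aux64 n hn]
  have hE4 : (4:ℝ) ≤ E := by nlinarith
  have hP4 : P ≤ 1/4 := by
    rw [hP_def]
    calc ε ^ (2*n+2) ≤ (1/8:ℝ) ^ (2*n+2) := pow_le_pow_left₀ hε.le hε1 _
      _ ≤ (1/8:ℝ) ^ 2 := pow_le_pow_of_le_one (by norm_num) (by norm_num) (by omega)
      _ ≤ 1/4 := by norm_num
  have hε2 : ε^2 ≤ 1 := by nlinarith
  have hε0 : (0:ℝ) ≤ ε^2 := sq_nonneg ε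
  clear_value a b E P
  rw [← sub_nonneg]
  have key : c^2 * (1 - P) / a + c*d*(1-ε^2) + d^2 * (E - 1) / b
      - (1 / 4) * (c ^ 2 / a + d ^ 2 * E / b)
      = (c^2*(1-P)*b + c*d*(1-ε^2)*(a*b) + d^2*(E-1)*a
          - (1/4)*(c^2*b + d^2*E*a)) / (a*b) := by
    field_simp
  rw [key]
  apply div_nonneg _ (by positivity)
  have ht : (0:ℝ) ≤ 1 - ε^2 := by linarith
  have step1 : (1/2)*c^2*b ≤ c^2*(1-P)*b - (1/4)*(c^2*b) := by
    nlinarith [mul_nonneg (mul_nonneg (sq_nonneg c) hb.le) (by linarith : (0:ℝ) ≤ 1/4 - P)]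
  have step2 : (1/2)*a^2*b*d^2 ≤ d^2*(E-1)*a - (1/4)*(d^2*E*a) := by
    nlinarith [mul_nonneg (mul_nonneg (sq_nonneg d) ha.le) (by linarith : (0:ℝ) ≤ E - 4),
      mul_nonneg (mul_nonneg (sq_nonneg d) ha.le) (by linarith : (0:ℝ) ≤ E - a*b)]
  have step3 : 0 ≤ (1/2)*c^2*b + (1/2)*a^2*b*d^2 + c*d*(1-ε^2)*(a*b) :=
    auxquad a b (1-ε^2) c d hb.le ht (by linarith)
  linarith [step1, step2, step3]

/-- L² lower bound for harmonic Fourier modes of frequency `n ≥ 2` on an annulus, from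
Step 2 of the proof of Proposition 3.2:
`∫_ε^1 (c rⁿ + d r^{−n})² r dr ≥ (1/4)(c²/(2n+2) + d² ε^{2−2n}/(2n−2))`. -/
theorem stmt12 : ∃ ε₀ : ℝ, 0 < ε₀ ∧ ε₀ ≤ 1 / 2 ∧
    ∀ n : ℕ, 2 ≤ n → ∀ ε : ℝ, 0 < ε → ε ≤ ε₀ → ∀ c d : ℝ,
      (1 / 4) * (c ^ 2 / (2 * (n:ℝ) + 2)
          + d ^ 2 * ε ^ ((2:ℤ) - 2 * (n:ℤ)) / (2 * (n:ℝ) - 2))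
        ≤ ∫ r in ε..1, (c * r ^ n + d * r ^ (-(n:ℤ))) ^ 2 * r := by
  refine ⟨1/8, by norm_num, by norm_num, ?_⟩
  intro n hn ε hε hεle c d
  rw [auxint n hn ε hε hεle c d]
  exact auxineq n hn ε hε hεle c d
end

section
/- (Pohozaev identity for harmonic functions on an annulus, used in Step 2 of the proof of Proposition 3.2.) Let 0 ≤ r₁ < r₂ ≤ +∞ and let γ : ℝ² → ℝ be twice continuously differentiable with vanishing Laplacian on the annulus A = {x ∈ ℝ² : r₁ < ‖x‖ < r₂}. Then the function P(r) = ∫₀^{2π} ( r² (∂_r γ(r,θ))² − (∂_θ γ(r,θ))² ) dθ is constant on (r₁, r₂). -/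
open MeasureTheory Complex
open scoped ENNReal

section PohozaevAux
open Set Metric


noncomputable def auxF (γ : ℂ → ℝ) (z : ℂ) : ℂ :=
  ((fderiv ℝ γ z 1 : ℝ) : ℂ) - ((fderiv ℝ γ z I : ℝ) : ℂ) * I

noncomputable def auxG (γ : ℂ → ℝ) (z : ℂ) : ℂ := (z * auxF γ z) ^ 2

lemma aux_fderiv_apply (γ : ℂ → ℝ) (z v : ℂ) :
    fderiv ℝ γ z v = v.re * fderiv ℝ γ z 1 + v.im * fderiv ℝ γ z I := by
  have hv : v = v.re • (1 : ℂ) + v.im • I := by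
    simp [Complex.real_smul]
  conv_lhs => rw [hv]
  rw [map_add, _root_.map_smul, _root_.map_smul]
  simp [smul_eq_mul]

lemma aux_pt (γ : ℂ → ℝ) (ρ θ : ℝ) :
    ρ ^ 2 * (fderiv ℝ γ (ρ * exp (θ * I)) (exp (θ * I))) ^ 2
      - (fderiv ℝ γ (ρ * exp (θ * I)) (ρ * I * exp (θ * I))) ^ 2
      = (auxG γ (circleMap 0 ρ θ)).re := by
  rw [circleMap_zero]
  rw [aux_fderiv_apply γ _ (exp (θ * I)), aux_fderiv_apply γ _ ((ρ : ℂ) * I * exp (θ * I))]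
  simp only [auxG, auxF, pow_two, Complex.mul_re, Complex.mul_im, Complex.sub_re,
    Complex.sub_im, Complex.ofReal_re, Complex.ofReal_im, Complex.I_re, Complex.I_im,
    Complex.add_re, Complex.add_im]
  ring

lemma aux_isOpen (r₁ r₂ : ℝ≥0∞) :
    IsOpen {z : ℂ | r₁ < (‖z‖₊ : ℝ≥0∞) ∧ (‖z‖₊ : ℝ≥0∞) < r₂} := by
  have hc : Continuous fun z : ℂ => (‖z‖₊ : ℝ≥0∞) :=
    ENNReal.continuous_coe.comp continuous_nnnorm
  exact isOpen_Ioo.preimage hc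

lemma auxF_diff (r₁ r₂ : ℝ≥0∞) (γ : ℂ → ℝ)
    (hγ : ContDiffOn ℝ 2 γ {z : ℂ | r₁ < (‖z‖₊ : ℝ≥0∞) ∧ (‖z‖₊ : ℝ≥0∞) < r₂})
    (hharm : ∀ z : ℂ, r₁ < (‖z‖₊ : ℝ≥0∞) → (‖z‖₊ : ℝ≥0∞) < r₂ →
      fderiv ℝ (fun w => fderiv ℝ γ w 1) z 1 + fderiv ℝ (fun w => fderiv ℝ γ w I) z I = 0)
    {z : ℂ} (hz1 : r₁ < (‖z‖₊ : ℝ≥0∞)) (hz2 : (‖z‖₊ : ℝ≥0∞) < r₂) :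
    DifferentiableAt ℂ (auxF γ) z := by
  have hγz : ContDiffAt ℝ 2 γ z :=
    hγ.contDiffAt ((aux_isOpen r₁ r₂).mem_nhds ⟨hz1, hz2⟩)
  have hd1 : ContDiffAt ℝ 1 (fderiv ℝ γ) z := hγz.fderiv_right (by norm_num)
  have hd : DifferentiableAt ℝ (fderiv ℝ γ) z := hd1.differentiableAt one_ne_zero
  set F'' := fderiv ℝ (fderiv ℝ γ) z with hF''
  have happ : ∀ c : ℂ, HasFDerivAt (fun w => fderiv ℝ γ w c)
      ((ContinuousLinearMap.apply ℝ ℝ c).comp F'') z := fun c =>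
    (ContinuousLinearMap.apply ℝ ℝ c).hasFDerivAt.comp z hd.hasFDerivAt
  have hsymm : F'' 1 I = F'' I 1 := hγz.isSymmSndFDerivAt (by simp) 1 I
  have hlap : F'' 1 1 + F'' I I = 0 := by
    have h := hharm z hz1 hz2
    rwa [(happ 1).fderiv, (happ I).fderiv] at h
  -- derivative of auxF
  have h1 : HasFDerivAt (fun w => ((fderiv ℝ γ w 1 : ℝ) : ℂ))
      (Complex.ofRealCLM.comp ((ContinuousLinearMap.apply ℝ ℝ (1:ℂ)).comp F'')) z :=
    Complex.ofRealCLM.hasFDerivAt.comp z (happ 1)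
  have h2 : HasFDerivAt (fun w => ((fderiv ℝ γ w I : ℝ) : ℂ) * I)
      (I • (Complex.ofRealCLM.comp ((ContinuousLinearMap.apply ℝ ℝ I).comp F''))) z := by
    simpa using (Complex.ofRealCLM.hasFDerivAt.comp z (happ I)).mul_const I
  have hL : HasFDerivAt (auxF γ) _ z := h1.sub h2
  set L := (Complex.ofRealCLM.comp ((ContinuousLinearMap.apply ℝ ℝ (1:ℂ)).comp F'')) -
      (I • (Complex.ofRealCLM.comp ((ContinuousLinearMap.apply ℝ ℝ I).comp F''))) with hLdef
  have hLv : ∀ v : ℂ, L v = ((F'' v 1 : ℝ) : ℂ) - ((F'' v I : ℝ) : ℂ) * I := by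
    intro v
    simp [hLdef, Complex.real_smul, smul_eq_mul]
    ring
  have hCR : L I = L 1 * I := by
    rw [hLv, hLv]
    have hII : (F'' I I : ℝ) = - F'' 1 1 := by linarith
    rw [hII, hsymm]
    simp [Complex.ext_iff]
  set M : ℂ →L[ℂ] ℂ := (L 1) • (ContinuousLinearMap.id ℂ ℂ) with hMdef
  have hLM : M.restrictScalars ℝ = L := by
    apply ContinuousLinearMap.ext
    intro w
    have hw : w = w.re • (1 : ℂ) + w.im • I := by simp [Complex.real_smul]
    rw [hw, map_add, _root_.map_smul, _root_.map_smul, map_add, _root_.map_smul,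
      _root_.map_smul]
    simp [hMdef, hCR, smul_eq_mul]
  exact ⟨M, hasFDerivAt_of_restrictScalars ℝ hL hLM⟩

theorem stmt14' (r₁ r₂ : ℝ≥0∞) (h₁₂ : r₁ < r₂) (γ : ℂ → ℝ)
    (hγ : ContDiffOn ℝ 2 γ {z : ℂ | r₁ < (‖z‖₊ : ℝ≥0∞) ∧ (‖z‖₊ : ℝ≥0∞) < r₂})
    (hF : ∀ {z : ℂ}, r₁ < (‖z‖₊ : ℝ≥0∞) → (‖z‖₊ : ℝ≥0∞) < r₂ → DifferentiableAt ℂ (auxF γ) z)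
    (hpt : ∀ (ρ θ : ℝ), ρ ^ 2 * (fderiv ℝ γ (ρ * exp (θ * I)) (exp (θ * I))) ^ 2
      - (fderiv ℝ γ (ρ * exp (θ * I)) (ρ * I * exp (θ * I))) ^ 2
      = (auxG γ (circleMap 0 ρ θ)).re) :
    ∀ r r' : ℝ,
      r₁ < ENNReal.ofReal r → ENNReal.ofReal r < r₂ →
      r₁ < ENNReal.ofReal r' → ENNReal.ofReal r' < r₂ →
      (∫ θ in (0:ℝ)..(2 * Real.pi),
          (r ^ 2 * (fderiv ℝ γ (r * exp (θ * I)) (exp (θ * I))) ^ 2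
            - (fderiv ℝ γ (r * exp (θ * I)) (r * I * exp (θ * I))) ^ 2))
        = ∫ θ in (0:ℝ)..(2 * Real.pi),
            (r' ^ 2 * (fderiv ℝ γ (r' * exp (θ * I)) (exp (θ * I))) ^ 2
              - (fderiv ℝ γ (r' * exp (θ * I)) (r' * I * exp (θ * I))) ^ 2) := by
  have hGd : ∀ {z : ℂ}, r₁ < (‖z‖₊ : ℝ≥0∞) → (‖z‖₊ : ℝ≥0∞) < r₂ →
      DifferentiableAt ℂ (auxG γ) z := fun h1 h2 =>
    (differentiableAt_id.mul (hF h1 h2)).pow 2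
  have hpos : ∀ {ρ : ℝ}, r₁ < ENNReal.ofReal ρ → 0 < ρ := fun {ρ} h =>
    ENNReal.ofReal_pos.mp (lt_of_le_of_lt (zero_le : (0:ℝ≥0∞) ≤ r₁) h)
  -- main circle-integral equality
  have main : ∀ ρ ρ' : ℝ, r₁ < ENNReal.ofReal ρ → ENNReal.ofReal ρ < r₂ →
      r₁ < ENNReal.ofReal ρ' → ENNReal.ofReal ρ' < r₂ → ρ ≤ ρ' →
      (∫ θ in (0:ℝ)..(2 * Real.pi), auxG γ (circleMap 0 ρ θ)) =
        ∫ θ in (0:ℝ)..(2 * Real.pi), auxG γ (circleMap 0 ρ' θ) := by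
    intro ρ ρ' h1 h2 h1' h2' hle
    have hρ : 0 < ρ := hpos h1
    have hsub : ∀ z : ℂ, ρ ≤ ‖z‖ → ‖z‖ ≤ ρ' →
        r₁ < (‖z‖₊ : ℝ≥0∞) ∧ (‖z‖₊ : ℝ≥0∞) < r₂ := by
      intro z hz1 hz2
      have he : (‖z‖₊ : ℝ≥0∞) = ENNReal.ofReal ‖z‖ := (ofReal_norm z).symm
      constructor
      · rw [he]; exact lt_of_lt_of_le h1 (ENNReal.ofReal_le_ofReal hz1)
      · rw [he]; exact lt_of_le_of_lt (ENNReal.ofReal_le_ofReal hz2) h2'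
    have hcont : ContinuousOn (auxG γ) (closedBall (0:ℂ) ρ' \ ball 0 ρ) := by
      intro z hz
      simp only [mem_diff, mem_closedBall, mem_ball, dist_zero_right, not_lt] at hz
      exact (hGd (hsub z hz.2 hz.1).1 (hsub z hz.2 hz.1).2).continuousAt.continuousWithinAt
    have hd : ∀ z ∈ (ball (0:ℂ) ρ' \ closedBall 0 ρ) \ (∅ : Set ℂ),
        DifferentiableAt ℂ (auxG γ) z := by
      intro z hz
      simp only [mem_diff, mem_ball, mem_closedBall, dist_zero_right, not_le,
        mem_empty_iff_false, not_false_iff, and_true] at hz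
      exact hGd (hsub z hz.2.le hz.1.le).1 (hsub z hz.2.le hz.1.le).2
    have hkey := circleIntegral_sub_center_inv_smul_eq_of_differentiable_on_annulus_off_countable
      (c := (0:ℂ)) hρ hle (f := auxG γ) countable_empty hcont hd
    have hunfold : ∀ σ : ℝ, 0 < σ → (∮ z in C((0:ℂ), σ), (z - 0)⁻¹ • auxG γ z)
        = I * ∫ θ in (0:ℝ)..(2 * Real.pi), auxG γ (circleMap 0 σ θ) := by
      intro σ hσ
      rw [circleIntegral, ← intervalIntegral.integral_const_mul]
      apply intervalIntegral.integral_congr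
      intro θ _
      have hne : circleMap 0 σ θ ≠ 0 := circleMap_ne_center hσ.ne'
      simp only [deriv_circleMap, sub_zero, smul_eq_mul]
      field_simp
    rw [hunfold ρ hρ, hunfold ρ' (hρ.trans_le hle)] at hkey
    exact (mul_left_cancel₀ I_ne_zero hkey).symm
  -- real part identification
  have hre : ∀ ρ : ℝ, r₁ < ENNReal.ofReal ρ → ENNReal.ofReal ρ < r₂ →
      (∫ θ in (0:ℝ)..(2 * Real.pi),
          (ρ ^ 2 * (fderiv ℝ γ (ρ * exp (θ * I)) (exp (θ * I))) ^ 2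
            - (fderiv ℝ γ (ρ * exp (θ * I)) (ρ * I * exp (θ * I))) ^ 2))
        = (∫ θ in (0:ℝ)..(2 * Real.pi), auxG γ (circleMap 0 ρ θ)).re := by
    intro ρ h1 h2
    have hρ : 0 < ρ := hpos h1
    have hmem : ∀ θ : ℝ, r₁ < (‖circleMap 0 ρ θ‖₊ : ℝ≥0∞) ∧
        (‖circleMap 0 ρ θ‖₊ : ℝ≥0∞) < r₂ := by
      intro θ
      have hn : ‖circleMap 0 ρ θ‖ = ρ := by
        simp [norm_circleMap_zero, abs_of_pos hρ]
      have he : (‖circleMap 0 ρ θ‖₊ : ℝ≥0∞) = ENNReal.ofReal ρ := by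
        rw [show (‖circleMap 0 ρ θ‖₊ : ℝ≥0∞) = ENNReal.ofReal ‖circleMap 0 ρ θ‖ from
          (ofReal_norm _).symm, hn]
      rw [he]; exact ⟨h1, h2⟩
    have hcont : Continuous fun θ => auxG γ (circleMap 0 ρ θ) :=
      continuous_iff_continuousAt.mpr fun θ =>
        (hGd (hmem θ).1 (hmem θ).2).continuousAt.comp (continuous_circleMap 0 ρ).continuousAt
    have hInt : IntervalIntegrable (fun θ => auxG γ (circleMap 0 ρ θ)) volume 0 (2 * Real.pi) :=
      hcont.intervalIntegrable 0 (2 * Real.pi)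
    calc (∫ θ in (0:ℝ)..(2 * Real.pi),
          (ρ ^ 2 * (fderiv ℝ γ (ρ * exp (θ * I)) (exp (θ * I))) ^ 2
            - (fderiv ℝ γ (ρ * exp (θ * I)) (ρ * I * exp (θ * I))) ^ 2))
        = ∫ θ in (0:ℝ)..(2 * Real.pi), Complex.reCLM (auxG γ (circleMap 0 ρ θ)) := by
          apply intervalIntegral.integral_congr
          intro θ _
          simpa using hpt ρ θ
      _ = Complex.reCLM (∫ θ in (0:ℝ)..(2 * Real.pi), auxG γ (circleMap 0 ρ θ)) :=
          Complex.reCLM.intervalIntegral_comp_comm hInt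
      _ = (∫ θ in (0:ℝ)..(2 * Real.pi), auxG γ (circleMap 0 ρ θ)).re := rfl
  intro r r' h1 h2 h1' h2'
  rcases le_total r r' with h | h
  · rw [hre r h1 h2, hre r' h1' h2', main r r' h1 h2 h1' h2' h]
  · rw [hre r h1 h2, hre r' h1' h2', main r' r h1' h2' h1 h2 h]

end PohozaevAux

/-- Pohozaev identity for harmonic functions on an annulus (Step 2 of the proof of
Proposition 3.2): if `γ` is C² with vanishing Laplacian on the annulus
`{r₁ < ‖z‖ < r₂}` (with `0 ≤ r₁ < r₂ ≤ +∞`), then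
`P(r) = ∫₀^{2π} (r²(∂_r γ)² − (∂_θ γ)²) dθ` is constant on `(r₁, r₂)`. -/
theorem stmt14 (r₁ r₂ : ℝ≥0∞) (h₁₂ : r₁ < r₂) (γ : ℂ → ℝ)
    (hγ : ContDiffOn ℝ 2 γ {z : ℂ | r₁ < (‖z‖₊ : ℝ≥0∞) ∧ (‖z‖₊ : ℝ≥0∞) < r₂})
    (hharm : ∀ z : ℂ, r₁ < (‖z‖₊ : ℝ≥0∞) → (‖z‖₊ : ℝ≥0∞) < r₂ →
      fderiv ℝ (fun w => fderiv ℝ γ w 1) z 1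
        + fderiv ℝ (fun w => fderiv ℝ γ w I) z I = 0) :
    ∀ r r' : ℝ,
      r₁ < ENNReal.ofReal r → ENNReal.ofReal r < r₂ →
      r₁ < ENNReal.ofReal r' → ENNReal.ofReal r' < r₂ →
      (∫ θ in (0:ℝ)..(2 * Real.pi),
          (r ^ 2 * (fderiv ℝ γ (r * exp (θ * I)) (exp (θ * I))) ^ 2
            - (fderiv ℝ γ (r * exp (θ * I)) (r * I * exp (θ * I))) ^ 2))
        = ∫ θ in (0:ℝ)..(2 * Real.pi),
            (r' ^ 2 * (fderiv ℝ γ (r' * exp (θ * I)) (exp (θ * I))) ^ 2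
              - (fderiv ℝ γ (r' * exp (θ * I)) (r' * I * exp (θ * I))) ^ 2) :=
  stmt14' r₁ r₂ h₁₂ γ hγ
    (fun {z} h1 h2 => auxF_diff r₁ r₂ γ hγ hharm h1 h2)
    (aux_pt γ)
end

section
/- (Tangential–normal derivative identity for decaying Laurent-type harmonic functions, from Step 2 of the proof of Proposition 3.2.) Let a, b ∈ ℝ, let N ≥ 1 be an integer and d₁, …, d_N ∈ ℂ, and define γ : ℝ² \ {0} → ℝ by γ(x) = a + b ln‖x‖ + Σ_{n=1}^N Re( dₙ (x₁ + i x₂)^{−n} ). Then for every r > 0: ∫₀^{2π} (∂_θ γ(r,θ))² dθ = r² ∫₀^{2π} (∂_r γ(r,θ))² dθ − 2π b². In particular ∫₀^{2π} (∂_θ γ(r,θ))² dθ ≤ r² ∫₀^{2π} (∂_r γ(r,θ))² dθ. -/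
open MeasureTheory Complex

noncomputable def Mc (c : ℂ) : ℂ →L[ℝ] ℝ :=
  Complex.reCLM.comp (((ContinuousLinearMap.mul ℂ ℂ) c).restrictScalars ℝ)

@[simp] lemma Mc_apply (c w : ℂ) : Mc c w = (c * w).re := rfl

lemma hasFDerivAt_log_norm {z : ℂ} (hz : z ≠ 0) :
    HasFDerivAt (fun w : ℂ => Real.log ‖w‖) (Mc z⁻¹) z := by
  have hns : Complex.normSq z ≠ 0 := by
    simpa [Complex.normSq_eq_zero] using hz
  have heq : (fun w : ℂ => Real.log ‖w‖) = fun w => (2⁻¹ : ℝ) * Real.log (Complex.normSq w) := by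
    funext w
    rw [Complex.norm_def, Real.log_sqrt (Complex.normSq_nonneg w),
      div_eq_inv_mul]
  rw [heq]
  have hre : HasFDerivAt (fun w : ℂ => w.re) (Complex.reCLM : ℂ →L[ℝ] ℝ) z :=
    Complex.reCLM.hasFDerivAt
  have him : HasFDerivAt (fun w : ℂ => w.im) (Complex.imCLM : ℂ →L[ℝ] ℝ) z :=
    Complex.imCLM.hasFDerivAt
  have hsq : HasFDerivAt (fun w : ℂ => Complex.normSq w)
      ((z.re • (Complex.reCLM : ℂ →L[ℝ] ℝ) + z.re • (Complex.reCLM : ℂ →L[ℝ] ℝ))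
        + (z.im • (Complex.imCLM : ℂ →L[ℝ] ℝ) + z.im • (Complex.imCLM : ℂ →L[ℝ] ℝ))) z := by
    have := (hre.mul hre).add (him.mul him)
    rw [show (fun w : ℂ => Complex.normSq w) = fun w => w.re * w.re + w.im * w.im from
      funext Complex.normSq_apply]
    exact this
  have hlog := ((Real.hasDerivAt_log hns).comp_hasFDerivAt z hsq).const_mul (2⁻¹ : ℝ)
  refine hlog.congr_fderiv ?_
  symm
  refine ContinuousLinearMap.ext fun w => ?_
  have hdiv : (z⁻¹ * w) = w / z := by ring
  simp only [Mc_apply, hdiv, Complex.div_re, ContinuousLinearMap.coe_smul',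
    ContinuousLinearMap.add_apply, Pi.smul_apply,
    smul_eq_mul, ContinuousLinearMap.smul_apply,
    Complex.reCLM_apply, Complex.imCLM_apply]
  field_simp
  ring

lemma hasFDerivAt_re_mul_zpow {z : ℂ} (hz : z ≠ 0) (c : ℂ) (m : ℤ) :
    HasFDerivAt (fun w : ℂ => (c * w ^ m).re) (Mc (c * m * z ^ (m - 1))) z := by
  have h1 : HasDerivAt (fun w : ℂ => c * w ^ m) (c * ((m : ℂ) * z ^ (m - 1))) z :=
    (hasDerivAt_zpow m z (Or.inl hz)).const_mul c
  have h2 := h1.hasFDerivAt.restrictScalars ℝ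
  have h3 := Complex.reCLM.hasFDerivAt.comp z h2
  refine h3.congr_fderiv ?_
  symm
  refine ContinuousLinearMap.ext fun w => ?_
  simp only [Mc_apply, ContinuousLinearMap.coe_comp', Function.comp_apply,
    ContinuousLinearMap.coe_restrictScalars', ContinuousLinearMap.smulRight_apply,
    ContinuousLinearMap.one_apply, smul_eq_mul, Complex.reCLM_apply,
    ContinuousLinearMap.toSpanSingleton_apply]
  rw [show c * (m : ℂ) * z ^ (m - 1) * w = w * (c * ((m : ℂ) * z ^ (m - 1))) by ring]

lemma hasFDerivAt_G (a b : ℝ) (N : ℕ) (d : ℕ → ℂ) {z : ℂ} (hz : z ≠ 0) :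
    HasFDerivAt
      (fun w : ℂ => a + b * Real.log ‖w‖ + ∑ n ∈ Finset.Icc 1 N, (d n * w ^ (-(n:ℤ))).re)
      (Mc ((b : ℂ) * z⁻¹ + ∑ n ∈ Finset.Icc 1 N, d n * (-(n:ℤ)) * z ^ (-(n:ℤ) - 1))) z := by
  have h1 : HasFDerivAt (fun w : ℂ => a + b * Real.log ‖w‖) (b • Mc z⁻¹) z :=
    ((hasFDerivAt_log_norm hz).const_mul b).const_add a
  have h2 : HasFDerivAt (fun w : ℂ => ∑ n ∈ Finset.Icc 1 N, (d n * w ^ (-(n:ℤ))).re)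
      (∑ n ∈ Finset.Icc 1 N, Mc (d n * (-(n:ℤ)) * z ^ (-(n:ℤ) - 1))) z :=
    HasFDerivAt.fun_sum fun n _ => by
      have hh := hasFDerivAt_re_mul_zpow hz (d n) (-(n:ℤ))
      rwa [show ((-(n:ℤ) : ℤ) : ℂ) = -((n:ℕ):ℂ) by push_cast; ring] at hh
  have h3 := h1.add h2
  refine h3.congr_fderiv ?_
  symm
  refine ContinuousLinearMap.ext fun w => ?_
  simp only [Mc_apply, add_mul, Complex.add_re, ContinuousLinearMap.add_apply,
    ContinuousLinearMap.smul_apply, ContinuousLinearMap.coe_sum', Finset.sum_apply,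
    Finset.sum_mul, Complex.re_sum, smul_eq_mul]
  congr 1
  rw [mul_assoc]
  simp [Complex.mul_re]

lemma integral_exp_neg_nat (k : ℕ) (hk : 1 ≤ k) :
    ∫ θ in (0:ℝ)..(2 * Real.pi), Complex.exp (-(k:ℂ) * I * θ) = 0 := by
  have hk0 : (k : ℂ) ≠ 0 := Nat.cast_ne_zero.2 (by omega)
  have hc : (-(k:ℂ) * I) ≠ 0 := by
    simp [Complex.I_ne_zero, hk0]
  rw [integral_exp_mul_complex hc]
  have h1 : Complex.exp (-(k:ℂ) * I * ((2 * Real.pi : ℝ) : ℂ)) = 1 := by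
    have h2 := Complex.exp_int_mul_two_pi_mul_I (-(k:ℤ))
    rw [show ((-(k:ℤ) : ℤ) : ℂ) * (2 * Real.pi * I) = -(k:ℂ) * I * ((2 * Real.pi : ℝ):ℂ) by
      push_cast; ring] at h2
    exact h2
  rw [h1]
  simp

set_option maxHeartbeats 1000000 in
/-- Tangential–normal derivative identity for decaying Laurent-type harmonic functions
(Step 2 of the proof of Proposition 3.2): for
`γ(x) = a + b ln‖x‖ + Σ_{n=1}^N Re(dₙ (x₁+ix₂)^{−n})` and every `r > 0`,
`∫₀^{2π} (∂_θ γ)² dθ = r² ∫₀^{2π} (∂_r γ)² dθ − 2π b²`; in particular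
`∫₀^{2π} (∂_θ γ)² dθ ≤ r² ∫₀^{2π} (∂_r γ)² dθ`. -/
theorem stmt15 (a b : ℝ) (N : ℕ) (hN : 1 ≤ N) (d : ℕ → ℂ) (γ : ℂ → ℝ)
    (hγ : ∀ z : ℂ, z ≠ 0 →
      γ z = a + b * Real.log ‖z‖ + ∑ n ∈ Finset.Icc 1 N, (d n * z ^ (-(n:ℤ))).re)
    (r : ℝ) (hr : 0 < r) :
    (∫ θ in (0:ℝ)..(2 * Real.pi),
        (fderiv ℝ γ (r * exp (θ * I)) (r * I * exp (θ * I))) ^ 2)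
      = r ^ 2 * (∫ θ in (0:ℝ)..(2 * Real.pi),
          (fderiv ℝ γ (r * exp (θ * I)) (exp (θ * I))) ^ 2)
        - 2 * Real.pi * b ^ 2
    ∧ (∫ θ in (0:ℝ)..(2 * Real.pi),
        (fderiv ℝ γ (r * exp (θ * I)) (r * I * exp (θ * I))) ^ 2)
      ≤ r ^ 2 * ∫ θ in (0:ℝ)..(2 * Real.pi),
          (fderiv ℝ γ (r * exp (θ * I)) (exp (θ * I))) ^ 2 := by
  have hr' : (r : ℂ) ≠ 0 := Complex.ofReal_ne_zero.2 hr.ne'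
  set z : ℝ → ℂ := fun θ => (r : ℂ) * exp (θ * I) with hzdef
  have hz : ∀ θ : ℝ, z θ ≠ 0 := fun θ => mul_ne_zero hr' (Complex.exp_ne_zero _)
  set g : ℂ → ℂ := fun w =>
    (b : ℂ) * w⁻¹ + ∑ n ∈ Finset.Icc 1 N, d n * (-(n:ℤ)) * w ^ (-(n:ℤ) - 1) with hgdef
  set c : ℕ → ℂ := fun n => d n * (-(n:ℤ)) * (r : ℂ) ^ (-(n:ℤ)) with hcdef
  set E : ℕ → ℝ → ℂ := fun n θ => Complex.exp (-(n:ℂ) * I * θ) with hEdef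
  set S : ℝ → ℂ := fun θ => ∑ n ∈ Finset.Icc 1 N, c n * E n θ with hSdef
  set h : ℝ → ℂ := fun θ => (b : ℂ) + S θ with hhdef
  -- fderiv formula
  have hfd : ∀ θ : ℝ, fderiv ℝ γ (z θ) = Mc (g (z θ)) := by
    intro θ
    have hG := hasFDerivAt_G a b N d (hz θ)
    have hev : γ =ᶠ[nhds (z θ)]
        (fun w : ℂ => a + b * Real.log ‖w‖ + ∑ n ∈ Finset.Icc 1 N, (d n * w ^ (-(n:ℤ))).re) := by
      filter_upwards [isOpen_compl_singleton.mem_nhds (hz θ)] with w hw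
      exact hγ w hw
    exact (hG.congr_of_eventuallyEq hev).fderiv
  -- algebra: g (z θ) * z θ = h θ
  have hexp : ∀ (m : ℤ) (θ : ℝ), (exp ((θ:ℂ) * I)) ^ m = exp ((m : ℂ) * ((θ:ℂ) * I)) := by
    intro m θ
    rw [← Complex.exp_int_mul]
  have hzpow : ∀ (n : ℕ) (θ : ℝ), (z θ) ^ (-(n:ℤ)) = (r : ℂ) ^ (-(n:ℤ)) * E n θ := by
    intro n θ
    rw [hzdef]
    simp only
    rw [mul_zpow, hexp]
    congr 1
    rw [hEdef]
    push_cast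
    ring
  have hgz : ∀ θ : ℝ, g (z θ) * z θ = h θ := by
    intro θ
    rw [hgdef, hhdef, hSdef]
    simp only
    rw [add_mul, Finset.sum_mul]
    congr 1
    · rw [mul_assoc, inv_mul_cancel₀ (hz θ), mul_one]
    · refine Finset.sum_congr rfl fun n _ => ?_
      rw [mul_assoc, show (z θ) ^ (-(n:ℤ) - 1) * z θ = (z θ) ^ (-(n:ℤ)) by
        rw [← zpow_add_one₀ (hz θ)]; congr 1; omega]
      rw [hzpow n θ, hcdef]
      ring
  -- pointwise integrand identities
  have I1 : ∀ θ : ℝ, fderiv ℝ γ (z θ) ((r:ℂ) * I * exp ((θ:ℂ) * I)) = -(h θ).im := by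
    intro θ
    rw [hfd θ, Mc_apply]
    rw [show g (z θ) * ((r:ℂ) * I * exp ((θ:ℂ) * I)) = I * (g (z θ) * z θ) by
      rw [hzdef]; simp only; ring]
    rw [hgz θ]
    simp [Complex.mul_re]
  have I2 : ∀ θ : ℝ, fderiv ℝ γ (z θ) (exp ((θ:ℂ) * I)) = (h θ).re / r := by
    intro θ
    rw [hfd θ, Mc_apply]
    rw [show exp ((θ:ℂ) * I) = z θ * ((r⁻¹ : ℝ) : ℂ) by
      rw [hzdef]; simp only; push_cast; field_simp]
    rw [← mul_assoc, hgz θ]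
    simp only [Complex.mul_re, Complex.ofReal_re, Complex.ofReal_im, mul_zero, sub_zero,
      div_eq_mul_inv]
  -- continuity
  have hcontE : ∀ n : ℕ, Continuous (E n) := fun n =>
    (continuous_const.mul Complex.continuous_ofReal).cexp
  have hcontS : Continuous S := by
    rw [hSdef]
    exact continuous_finset_sum _ fun n _ => continuous_const.mul (hcontE n)
  have hcont : Continuous h := by
    rw [hhdef]; exact continuous_const.add hcontS
  have hint_re : IntervalIntegrable (fun θ => (h θ).re ^ 2) volume (0:ℝ) (2 * Real.pi) :=
    ((Complex.continuous_re.comp hcont).pow 2).intervalIntegrable _ _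
  have hint_im : IntervalIntegrable (fun θ => (h θ).im ^ 2) volume (0:ℝ) (2 * Real.pi) :=
    ((Complex.continuous_im.comp hcont).pow 2).intervalIntegrable _ _
  have hiE : ∀ n : ℕ, IntervalIntegrable (E n) volume (0:ℝ) (2 * Real.pi) :=
    fun n => (hcontE n).intervalIntegrable _ _
  have hiS : IntervalIntegrable S volume (0:ℝ) (2 * Real.pi) :=
    hcontS.intervalIntegrable _ _
  have hE0 : ∀ n : ℕ, 1 ≤ n → (∫ θ in (0:ℝ)..(2 * Real.pi), E n θ) = 0 := by
    intro n hn
    rw [hEdef]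
    exact integral_exp_neg_nat n hn
  -- ∫ S = 0
  have hS0 : (∫ θ in (0:ℝ)..(2 * Real.pi), S θ) = 0 := by
    rw [hSdef]
    rw [intervalIntegral.integral_finset_sum (fun n _ => (hiE n).const_mul _)]
    refine Finset.sum_eq_zero fun n hn => ?_
    rw [intervalIntegral.integral_const_mul, hE0 n (Finset.mem_Icc.1 hn).1, mul_zero]
  -- ∫ S² = 0
  have hS2point : ∀ θ : ℝ, S θ ^ 2
      = ∑ n ∈ Finset.Icc 1 N, ∑ m ∈ Finset.Icc 1 N, (c n * c m) * E (n + m) θ := by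
    intro θ
    rw [hSdef]
    simp only [sq, Finset.sum_mul_sum]
    refine Finset.sum_congr rfl fun n _ => Finset.sum_congr rfl fun m _ => ?_
    rw [hEdef]
    simp only
    rw [show -((n + m : ℕ):ℂ) * I * θ = (-(n:ℂ) * I * θ) + (-(m:ℂ) * I * θ) by push_cast; ring,
      Complex.exp_add]
    ring
  have hS2 : (∫ θ in (0:ℝ)..(2 * Real.pi), S θ ^ 2) = 0 := by
    simp only [hS2point]
    rw [intervalIntegral.integral_finset_sum (fun n _ =>
      ((continuous_finset_sum _ fun m _ =>
        continuous_const.fun_mul (hcontE (n + m))).intervalIntegrable _ _))]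
    refine Finset.sum_eq_zero fun n hn => ?_
    rw [intervalIntegral.integral_finset_sum (fun m _ =>
      ((continuous_const.fun_mul (hcontE (n + m))).intervalIntegrable _ _))]
    refine Finset.sum_eq_zero fun m hm => ?_
    rw [intervalIntegral.integral_const_mul,
      hE0 (n + m) (le_trans (Finset.mem_Icc.1 hn).1 (Nat.le_add_right n m)), mul_zero]
  -- ∫ h² = 2πb²
  have hsq_int : (∫ θ in (0:ℝ)..(2 * Real.pi), (h θ) ^ 2) = ((2 * Real.pi * b ^ 2 : ℝ) : ℂ) := by
    have hh2 : ∀ θ : ℝ, h θ ^ 2 = ((b:ℂ)^2 + (2 * (b:ℂ)) * S θ) + S θ ^ 2 := by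
      intro θ; rw [hhdef]; simp only; ring
    simp only [hh2]
    rw [intervalIntegral.integral_add
      ((continuous_const.intervalIntegrable _ _).add (hiS.const_mul _))
      ((hcontS.fun_pow 2).intervalIntegrable _ _),
      intervalIntegral.integral_add (continuous_const.intervalIntegrable _ _)
        (hiS.const_mul _),
      intervalIntegral.integral_const_mul, hS0, hS2, intervalIntegral.integral_const]
    rw [Complex.real_smul]
    push_cast
    ring
  -- X - Y = 2πb²
  have hXY : (∫ θ in (0:ℝ)..(2 * Real.pi), (h θ).re ^ 2)
      - (∫ θ in (0:ℝ)..(2 * Real.pi), (h θ).im ^ 2) = 2 * Real.pi * b ^ 2 := by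
    rw [← intervalIntegral.integral_sub hint_re hint_im]
    have hpt : ∀ θ : ℝ, (h θ).re ^ 2 - (h θ).im ^ 2 = Complex.reCLM ((h θ) ^ 2) := by
      intro θ
      simp only [Complex.reCLM_apply, sq, Complex.mul_re]
    simp only [hpt]
    rw [ContinuousLinearMap.intervalIntegral_comp_comm _
      ((hcont.fun_pow 2).intervalIntegrable _ _), hsq_int, Complex.reCLM_apply,
      Complex.ofReal_re]
  -- rewrite goal integrals
  have hL : (∫ θ in (0:ℝ)..(2 * Real.pi),
      (fderiv ℝ γ (r * exp (θ * I)) (r * I * exp (θ * I))) ^ 2)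
      = ∫ θ in (0:ℝ)..(2 * Real.pi), (h θ).im ^ 2 := by
    refine intervalIntegral.integral_congr fun θ _ => ?_
    have : fderiv ℝ γ ((r:ℂ) * exp ((θ:ℂ) * I)) ((r:ℂ) * I * exp ((θ:ℂ) * I))
        = fderiv ℝ γ (z θ) ((r:ℂ) * I * exp ((θ:ℂ) * I)) := rfl
    rw [this, I1 θ]
    ring
  have hR : (∫ θ in (0:ℝ)..(2 * Real.pi),
      (fderiv ℝ γ (r * exp (θ * I)) (exp (θ * I))) ^ 2)
      = (∫ θ in (0:ℝ)..(2 * Real.pi), (h θ).re ^ 2) / r ^ 2 := by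
    rw [← intervalIntegral.integral_div]
    refine intervalIntegral.integral_congr fun θ _ => ?_
    have : fderiv ℝ γ ((r:ℂ) * exp ((θ:ℂ) * I)) (exp ((θ:ℂ) * I))
        = fderiv ℝ γ (z θ) (exp ((θ:ℂ) * I)) := rfl
    rw [this, I2 θ]
    rw [div_pow]
  rw [hL, hR]
  have hr2 : r ^ 2 ≠ 0 := pow_ne_zero 2 hr.ne'
  constructor
  · rw [mul_div_cancel₀ _ hr2]
    linarith
  · rw [mul_div_cancel₀ _ hr2]
    nlinarith [Real.pi_pos, sq_nonneg b]
end
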